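/- arXiv:2011.08358 — 5 statements merged into one kernel-verified Lean document; each statement's English description precedes it below -/
import Mathlib

section
/- Let s ≤ r be tuples of positive reals and set w(m) := max{ p^{−(t_1 m_1 + ⋯ + t_n m_n)/(p−1)} : t ∈ {s_1,r_1}×⋯×{s_n,r_n} } for m ∈ ℤ^n. Then every element F of the completion Π_{[s,r]} has a unique expansion F = Σ_{m∈ℤ^n} a_m T^m as a series converging in Π_{[s,r]}, where (a_m)_{m∈ℤ^n} is a family in ℚ_p such that |a_m|_p · w(m) tends to 0 along the filter of cofinite subsets of ℤ^n; moreover ‖F‖_{[s,r]} = sup_m |a_m|_p · w(m). In other words, Π_{[s,r]} is isometrically ℚ_p-linearly isomorphic to the weighted c₀-space of ℤ^n-indexed families of p-adic numbers with weight w, the monomials T^m forming an orthogonal topological basis. -/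
open scoped BigOperators

/-- The weight `p^{-(t₁m₁+⋯+tₙmₙ)/(p-1)}` of the monomial `T^m` for the Gauss norm. -/
noncomputable def gaussWeight (p : ℕ) {n : ℕ} (t : Fin n → ℝ) (m : Fin n → ℤ) : ℝ :=
  (p : ℝ) ^ (-(∑ α, t α * (m α : ℝ)) / ((p : ℝ) - 1))

/-- The Gauss norm `‖Σ aₘ Tᵐ‖_t` on the Laurent polynomial ring
`ℚ_p[T₁^{±1},…,Tₙ^{±1}]`, realized as the monoid algebra of `ℤⁿ` over `ℚ_p`. -/
noncomputable def gaussNorm (p : ℕ) [Fact p.Prime] {n : ℕ} (t : Fin n → ℝ)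
    (f : AddMonoidAlgebra ℚ_[p] (Fin n → ℤ)) : ℝ :=
  ⨆ m : Fin n → ℤ, ‖f.coeff m‖ * gaussWeight p t m

/-- The corner tuple of the box `∏ [sα, rα]` indexed by `c : Fin n → Bool`. -/
def corner {n : ℕ} (s r : Fin n → ℝ) (c : Fin n → Bool) : Fin n → ℝ :=
  fun α => if c α then r α else s α

/-- The interval norm `‖f‖_{[s,r]}`: the maximum of the Gauss norms over the `2ⁿ` corners. -/
noncomputable def intervalGaussNorm (p : ℕ) [Fact p.Prime] {n : ℕ} (s r : Fin n → ℝ)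
    (f : AddMonoidAlgebra ℚ_[p] (Fin n → ℤ)) : ℝ :=
  ⨆ c : Fin n → Bool, gaussNorm p (corner s r c) f

/-- The weight `w(m) = max over corner tuples t of p^{-(Σ tαmα)/(p-1)}`. -/
noncomputable def cornerWeight (p : ℕ) {n : ℕ} (s r : Fin n → ℝ) (m : Fin n → ℤ) : ℝ :=
  ⨆ c : Fin n → Bool, gaussWeight p (corner s r c) m

/-- The monomial `c · T^m` in the Laurent polynomial ring. -/
noncomputable def lmonomial (p : ℕ) [Fact p.Prime] {n : ℕ} (m : Fin n → ℤ) (c : ℚ_[p]) :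
    AddMonoidAlgebra ℚ_[p] (Fin n → ℤ) :=
  AddMonoidAlgebra.single m c

/-- A completion `Π_{[s,r]}` of the Laurent polynomial ring with respect to a norm `N`. -/
structure GaussCompletion (p : ℕ) [Fact p.Prime] (n : ℕ)
    (N : AddMonoidAlgebra ℚ_[p] (Fin n → ℤ) → ℝ) where
  carrier : Type
  [normedRing : NormedCommRing carrier]
  [normedAlgebra : NormedAlgebra ℚ_[p] carrier]
  [complete : CompleteSpace carrier]
  emb : AddMonoidAlgebra ℚ_[p] (Fin n → ℤ) →ₐ[ℚ_[p]] carrier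
  isometric : ∀ f, ‖emb f‖ = N f
  denseRange : DenseRange (fun f => emb f)

attribute [instance] GaussCompletion.normedRing GaussCompletion.normedAlgebra
  GaussCompletion.complete

section Aux
variable {p : ℕ} [hp : Fact p.Prime] {n : ℕ} {s r : Fin n → ℝ}

lemma gaussWeight_pos (t : Fin n → ℝ) (m : Fin n → ℤ) : 0 < gaussWeight p t m :=
  Real.rpow_pos_of_pos (by exact_mod_cast hp.out.pos) _

lemma cornerWeight_pos (m : Fin n → ℤ) : 0 < cornerWeight p s r m := by
  have h : BddAbove (Set.range fun c => gaussWeight p (corner s r c) m) :=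
    (Set.finite_range _).bddAbove
  exact lt_of_lt_of_le (gaussWeight_pos (corner s r (fun _ => false)) m)
    (le_ciSup h (fun _ => false))

lemma gaussWeight_le_cornerWeight (c : Fin n → Bool) (m : Fin n → ℤ) :
    gaussWeight p (corner s r c) m ≤ cornerWeight p s r m := by
  have h : BddAbove (Set.range fun c => gaussWeight p (corner s r c) m) :=
    (Set.finite_range _).bddAbove
  exact le_ciSup h c

lemma bddAbove_coeff_mul (f : AddMonoidAlgebra ℚ_[p] (Fin n → ℤ)) (g : (Fin n → ℤ) → ℝ) :
    BddAbove (Set.range fun m => ‖f.coeff m‖ * g m) := by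
  apply BddAbove.mono (t := insert 0 ((fun m => ‖f.coeff m‖ * g m) '' f.coeff.support))
  · rintro x ⟨m, rfl⟩
    by_cases hm : m ∈ f.coeff.support
    · exact Set.mem_insert_of_mem _ ⟨m, hm, rfl⟩
    · simp only [Finsupp.notMem_support_iff.mp hm]
      simp
  · exact ((f.coeff.support.finite_toSet.image _).insert 0).bddAbove

lemma coeff_le_gaussNorm (f : AddMonoidAlgebra ℚ_[p] (Fin n → ℤ)) (t : Fin n → ℝ)
    (m : Fin n → ℤ) : ‖f.coeff m‖ * gaussWeight p t m ≤ gaussNorm p t f :=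
  le_ciSup (bddAbove_coeff_mul f _) m

lemma gaussNorm_nonneg (f : AddMonoidAlgebra ℚ_[p] (Fin n → ℤ)) (t : Fin n → ℝ) :
    0 ≤ gaussNorm p t f :=
  le_trans (mul_nonneg (norm_nonneg _) (gaussWeight_pos t (fun _ => 0)).le)
    (coeff_le_gaussNorm f t (fun _ => 0))

lemma gaussNorm_le_intervalGaussNorm (f : AddMonoidAlgebra ℚ_[p] (Fin n → ℤ))
    (c : Fin n → Bool) : gaussNorm p (corner s r c) f ≤ intervalGaussNorm p s r f := by
  have h : BddAbove (Set.range fun c => gaussNorm p (corner s r c) f) :=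
    (Set.finite_range _).bddAbove
  exact le_ciSup h c

lemma intervalGaussNorm_nonneg (f : AddMonoidAlgebra ℚ_[p] (Fin n → ℤ)) :
    0 ≤ intervalGaussNorm p s r f :=
  le_trans (gaussNorm_nonneg f _) (gaussNorm_le_intervalGaussNorm f (fun _ => false))

lemma coeff_mul_cornerWeight_le (f : AddMonoidAlgebra ℚ_[p] (Fin n → ℤ)) (m : Fin n → ℤ) :
    ‖f.coeff m‖ * cornerWeight p s r m ≤ intervalGaussNorm p s r f := by
  rw [cornerWeight, Real.mul_iSup_of_nonneg (norm_nonneg _)]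
  exact Real.iSup_le
    (fun c => le_trans (coeff_le_gaussNorm f _ m) (gaussNorm_le_intervalGaussNorm f c))
    (intervalGaussNorm_nonneg f)

lemma gaussNorm_single (t : Fin n → ℝ) (m : Fin n → ℤ) (c : ℚ_[p]) :
    gaussNorm p t (lmonomial p m c) = ‖c‖ * gaussWeight p t m := by
  apply le_antisymm
  · apply Real.iSup_le _ (mul_nonneg (norm_nonneg _) (gaussWeight_pos t m).le)
    intro m'
    by_cases h : m' = m
    · subst h
      simp [lmonomial, Finsupp.single_eq_same]
    · have : (lmonomial p m c).coeff m' = 0 := by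
        simp [lmonomial, Finsupp.single_apply, Ne.symm h]
      rw [this]
      simpa using mul_nonneg (norm_nonneg c) (gaussWeight_pos t m).le
  · have := le_ciSup (bddAbove_coeff_mul (lmonomial p m c) (gaussWeight p t)) m
    simpa [lmonomial, gaussNorm, Finsupp.single_eq_same] using this

lemma intervalGaussNorm_single (m : Fin n → ℤ) (c : ℚ_[p]) :
    intervalGaussNorm p s r (lmonomial p m c) = ‖c‖ * cornerWeight p s r m := by
  rw [intervalGaussNorm, cornerWeight, Real.mul_iSup_of_nonneg (norm_nonneg _)]
  exact iSup_congr fun c' => gaussNorm_single _ m c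

lemma intervalGaussNorm_add_le (f g : AddMonoidAlgebra ℚ_[p] (Fin n → ℤ)) :
    intervalGaussNorm p s r (f + g) ≤
      max (intervalGaussNorm p s r f) (intervalGaussNorm p s r g) := by
  apply Real.iSup_le _ (le_max_of_le_left (intervalGaussNorm_nonneg f))
  intro c
  apply Real.iSup_le _ (le_max_of_le_left (intervalGaussNorm_nonneg f))
  intro m
  have h1 : ‖(f + g).coeff m‖ ≤ max ‖f.coeff m‖ ‖g.coeff m‖ := by
    rw [AddMonoidAlgebra.coeff_add, Finsupp.add_apply]
    exact Padic.nonarchimedean _ _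
  calc ‖(f + g).coeff m‖ * gaussWeight p (corner s r c) m
      ≤ max ‖f.coeff m‖ ‖g.coeff m‖ * gaussWeight p (corner s r c) m :=
        mul_le_mul_of_nonneg_right h1 (gaussWeight_pos _ m).le
    _ = max (‖f.coeff m‖ * gaussWeight p (corner s r c) m)
          (‖g.coeff m‖ * gaussWeight p (corner s r c) m) :=
        max_mul_of_nonneg _ _ (gaussWeight_pos _ m).le
    _ ≤ max (intervalGaussNorm p s r f) (intervalGaussNorm p s r g) :=
        max_le_max
          (le_trans (coeff_le_gaussNorm f _ m) (gaussNorm_le_intervalGaussNorm f c))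
          (le_trans (coeff_le_gaussNorm g _ m) (gaussNorm_le_intervalGaussNorm g c))

lemma intervalGaussNorm_eq_zero (f : AddMonoidAlgebra ℚ_[p] (Fin n → ℤ))
    (h : intervalGaussNorm p s r f = 0) : f = 0 := by
  ext m
  have h1 := coeff_mul_cornerWeight_le (s := s) (r := r) f m
  rw [h] at h1
  have h2 := cornerWeight_pos (p := p) (s := s) (r := r) m
  have h3 : ‖f.coeff m‖ ≤ 0 := by nlinarith [norm_nonneg (f.coeff m)]
  simpa using norm_le_zero_iff.mp h3

end Aux

/-- Every element `F` of the completion `Π_{[s,r]}` has a unique expansion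
`F = Σ_{m∈ℤⁿ} aₘ Tᵐ` converging in `Π_{[s,r]}`, where `|aₘ|·w(m) → 0` along the cofinite
filter of `ℤⁿ`; moreover `‖F‖_{[s,r]} = sup_m |aₘ|·w(m)`.  In other words, `Π_{[s,r]}` is
isometrically isomorphic to the weighted `c₀`-space of `ℤⁿ`-indexed families of `ℚ_p`-numbers
with weight `w`, the monomials `Tᵐ` forming an orthogonal topological basis. -/
theorem gaussCompletion_unique_expansion_and_norm
    (p : ℕ) [Fact p.Prime] (n : ℕ) (s r : Fin n → ℝ)
    (hs : ∀ α, 0 < s α) (hsr : ∀ α, s α ≤ r α)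
    (C : GaussCompletion p n (intervalGaussNorm p s r)) :
    (∀ F : C.carrier, ∃! a : (Fin n → ℤ) → ℚ_[p],
      Filter.Tendsto (fun m => ‖a m‖ * cornerWeight p s r m) Filter.cofinite (nhds 0) ∧
      HasSum (fun m => C.emb (lmonomial p m (a m))) F) ∧
    (∀ (F : C.carrier) (a : (Fin n → ℤ) → ℚ_[p]),
      Filter.Tendsto (fun m => ‖a m‖ * cornerWeight p s r m) Filter.cofinite (nhds 0) →
      HasSum (fun m => C.emb (lmonomial p m (a m))) F →
      ‖F‖ = ⨆ m : Fin n → ℤ, ‖a m‖ * cornerWeight p s r m) := by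
  classical
  -- injectivity of the embedding
  have hinj : Function.Injective C.emb := by
    intro f g h
    have h0 : intervalGaussNorm p s r (f - g) = 0 := by
      rw [← C.isometric, map_sub, h, sub_self, norm_zero]
    have := intervalGaussNorm_eq_zero _ h0
    exact sub_eq_zero.mp this
  -- induced normed structure on the Laurent polynomial ring
  letI : NormedAddCommGroup (AddMonoidAlgebra ℚ_[p] (Fin n → ℤ)) :=
    NormedAddCommGroup.induced _ _ C.emb hinj
  letI : NormedSpace ℚ_[p] (AddMonoidAlgebra ℚ_[p] (Fin n → ℤ)) :=
    ⟨fun a f => by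
      change ‖C.emb (a • f)‖ ≤ ‖a‖ * ‖C.emb f‖
      rw [map_smul, norm_smul]⟩
  have hnorm : ∀ f : AddMonoidAlgebra ℚ_[p] (Fin n → ℤ),
      ‖f‖ = intervalGaussNorm p s r f := fun f => C.isometric f
  -- the embedding as a continuous linear map
  let embL : AddMonoidAlgebra ℚ_[p] (Fin n → ℤ) →L[ℚ_[p]] C.carrier :=
    LinearMap.mkContinuous (C.emb.toLinearMap) 1
      (fun f => by rw [one_mul]; exact le_of_eq rfl)
  have hiso : Isometry embL :=
    AddMonoidHomClass.isometry_of_norm embL (fun f => rfl)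
  have hdense : DenseRange (⇑embL) := C.denseRange
  -- coefficient functionals on the Laurent polynomial ring
  let ψ : (Fin n → ℤ) → (AddMonoidAlgebra ℚ_[p] (Fin n → ℤ) →L[ℚ_[p]] ℚ_[p]) := fun m =>
    LinearMap.mkContinuous
      { toFun := fun f => f.coeff m
        map_add' := fun f g => Finsupp.add_apply f.coeff g.coeff m
        map_smul' := fun a f => rfl }
      ((cornerWeight p s r m)⁻¹)
      (fun f => by
        rw [hnorm f]
        have h1 := coeff_mul_cornerWeight_le (s := s) (r := r) f m
        have h2 := cornerWeight_pos (p := p) (s := s) (r := r) m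
        rw [le_inv_mul_iff₀ h2, mul_comm]
        exact h1)
  -- extended coefficient functionals on the completion
  let φ : (Fin n → ℤ) → (C.carrier →L[ℚ_[p]] ℚ_[p]) := fun m =>
    (ψ m).extend embL
  have hφe : ∀ (m : Fin n → ℤ) f, φ m (C.emb f) = f.coeff m := fun m f =>
    ContinuousLinearMap.extend_eq (ψ m) hdense hiso.isUniformInducing f
  have hφb : ∀ (m : Fin n → ℤ) (x : C.carrier), ‖φ m x‖ * cornerWeight p s r m ≤ ‖x‖ := by
    intro m x
    have hclosed : IsClosed {y : C.carrier | ‖φ m y‖ * cornerWeight p s r m ≤ ‖y‖} :=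
      isClosed_le (((φ m).continuous.norm).mul continuous_const) continuous_norm
    have hsub : Set.range (fun f => C.emb f) ⊆
        {y : C.carrier | ‖φ m y‖ * cornerWeight p s r m ≤ ‖y‖} := by
      rintro _ ⟨f, rfl⟩
      simp only [Set.mem_setOf_eq, hφe]
      rw [C.isometric]
      exact coeff_mul_cornerWeight_le f m
    exact hclosed.closure_subset_iff.mpr hsub (C.denseRange x)
  -- the norm on the completion is nonarchimedean
  have hnonarch : ∀ x y : C.carrier, ‖x + y‖ ≤ max ‖x‖ ‖y‖ := by
    have hclosed : IsClosed {z : C.carrier × C.carrier | ‖z.1 + z.2‖ ≤ max ‖z.1‖ ‖z.2‖} :=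
      isClosed_le ((continuous_fst.add continuous_snd).norm)
        ((continuous_fst.norm).max (continuous_snd.norm))
    have hdense2 : DenseRange (Prod.map (fun f => C.emb f) (fun f => C.emb f)) :=
      C.denseRange.prodMap C.denseRange
    have hsub : Set.range (Prod.map (fun f => C.emb f) (fun f => C.emb f)) ⊆
        {z : C.carrier × C.carrier | ‖z.1 + z.2‖ ≤ max ‖z.1‖ ‖z.2‖} := by
      rintro _ ⟨⟨f, g⟩, rfl⟩
      simp only [Prod.map, Set.mem_setOf_eq]
      rw [← map_add, C.isometric, C.isometric, C.isometric]
      exact intervalGaussNorm_add_le f g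
    intro x y
    exact hclosed.closure_subset_iff.mpr hsub (hdense2 (x, y))
  -- finite sums are bounded by the max of the norms
  have hsumle : ∀ (t : Finset (Fin n → ℤ)) (g : (Fin n → ℤ) → C.carrier) (ε : ℝ), 0 ≤ ε →
      (∀ m ∈ t, ‖g m‖ ≤ ε) → ‖∑ m ∈ t, g m‖ ≤ ε := by
    intro t g ε hε
    induction t using Finset.induction_on with
    | empty => intro _; simpa using hε
    | insert a t' hnm ih =>
      intro h
      rw [Finset.sum_insert hnm]
      refine le_trans (hnonarch _ _) (max_le (h a (Finset.mem_insert_self a t')) ?_)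
      exact ih (fun m hm => h m (Finset.mem_insert_of_mem hm))
  -- norm of monomials
  have hms : ∀ (m : Fin n → ℤ) (c : ℚ_[p]),
      ‖C.emb (lmonomial p m c)‖ = ‖c‖ * cornerWeight p s r m := by
    intro m c
    rw [C.isometric]
    exact intervalGaussNorm_single m c
  -- approximation by Laurent polynomials
  have approx : ∀ (F : C.carrier) (ε : ℝ), 0 < ε →
      ∃ f : AddMonoidAlgebra ℚ_[p] (Fin n → ℤ), ‖F - C.emb f‖ < ε := by
    intro F ε hε
    have := Metric.mem_closure_iff.mp (C.denseRange F) ε hε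
    obtain ⟨_, ⟨f, rfl⟩, h⟩ := this
    exact ⟨f, by rwa [← dist_eq_norm]⟩
  have hkey : ∀ (F : C.carrier) (f : AddMonoidAlgebra ℚ_[p] (Fin n → ℤ)) (m : Fin n → ℤ),
      ‖φ m F - f.coeff m‖ * cornerWeight p s r m ≤ ‖F - C.emb f‖ := by
    intro F f m
    have h : φ m F - f.coeff m = φ m (F - C.emb f) := by rw [map_sub, hφe]
    rw [h]
    exact hφb m _
  -- convergence of the expansion built from φ
  have hasSum_a : ∀ F : C.carrier, HasSum (fun m => C.emb (lmonomial p m (φ m F))) F := by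
    intro F
    rw [HasSum, Metric.tendsto_nhds]
    intro ε hε
    obtain ⟨f, hf⟩ := approx F ε hε
    rw [SummationFilter.unconditional_filter, Filter.eventually_atTop]
    refine ⟨f.coeff.support, fun t ht => ?_⟩
    have hsupp : ∑ m ∈ f.coeff.support, lmonomial p m (f.coeff m) = f :=
        AddMonoidAlgebra.sum_coeff_single f
    have hfsum : ∑ m ∈ t, C.emb (lmonomial p m (f.coeff m)) = C.emb f := by
      rw [← map_sum]
      congr 1
      conv_rhs => rw [← hsupp]
      exact (Finset.sum_subset ht (fun m _ hm => by
        rw [Finsupp.notMem_support_iff.mp hm]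
        simp [lmonomial])).symm
    have hdecomp : ∑ m ∈ t, C.emb (lmonomial p m (φ m F)) =
        C.emb f + ∑ m ∈ t, C.emb (lmonomial p m (φ m F - f.coeff m)) := by
      rw [← hfsum, ← Finset.sum_add_distrib]
      refine Finset.sum_congr rfl (fun m _ => ?_)
      rw [← map_add]
      congr 1
      unfold lmonomial
      rw [← AddMonoidAlgebra.single_add]
      congr 1
      ring
    rw [dist_eq_norm, hdecomp]
    have h1 : C.emb f + ∑ m ∈ t, C.emb (lmonomial p m (φ m F - f.coeff m)) - F =
        (C.emb f - F) + ∑ m ∈ t, C.emb (lmonomial p m (φ m F - f.coeff m)) := by ring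
    rw [h1]
    refine lt_of_le_of_lt (hnonarch _ _) ?_
    rw [max_lt_iff]
    constructor
    · rwa [norm_sub_rev]
    · refine lt_of_le_of_lt (hsumle t _ ‖F - C.emb f‖ (norm_nonneg _) (fun m _ => ?_)) hf
      rw [hms]
      exact hkey F f m
  -- decay of the coefficients
  have tendsto_a : ∀ F : C.carrier,
      Filter.Tendsto (fun m => ‖φ m F‖ * cornerWeight p s r m) Filter.cofinite (nhds 0) := by
    intro F
    rw [Metric.tendsto_nhds]
    intro ε hε
    obtain ⟨f, hf⟩ := approx F ε hε
    rw [Filter.eventually_cofinite]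
    apply Set.Finite.subset f.coeff.support.finite_toSet
    intro m hm
    by_contra hm'
    apply hm
    have hfm : f.coeff m = 0 := Finsupp.notMem_support_iff.mp hm'
    have h1 : ‖φ m F‖ * cornerWeight p s r m ≤ ‖F - C.emb f‖ := by
      have := hkey F f m
      rwa [hfm, sub_zero] at this
    rw [Real.dist_0_eq_abs, abs_of_nonneg (mul_nonneg (norm_nonneg _)
      (cornerWeight_pos (p := p) (s := s) (r := r) m).le)]
    exact lt_of_le_of_lt h1 hf
  -- uniqueness of coefficients
  have coeff_eq : ∀ (F : C.carrier) (b : (Fin n → ℤ) → ℚ_[p]),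
      HasSum (fun m => C.emb (lmonomial p m (b m))) F → ∀ m₀, b m₀ = φ m₀ F := by
    intro F b hb m₀
    have h2 := hb.mapL (φ m₀)
    have h3 : (fun m => φ m₀ (C.emb (lmonomial p m (b m)))) =
        fun m => if m = m₀ then b m₀ else 0 := by
      funext m
      rw [hφe]
      show (AddMonoidAlgebra.single m (b m)).coeff m₀ = _
      rw [AddMonoidAlgebra.coeff_single, Finsupp.single_apply]
      by_cases h : m = m₀
      · subst h; simp
      · simp [h]
    rw [h3] at h2
    exact (h2.unique (hasSum_ite_eq m₀ (b m₀))).symm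
  -- the norm formula
  have norm_eq : ∀ F : C.carrier,
      ‖F‖ = ⨆ m : Fin n → ℤ, ‖φ m F‖ * cornerWeight p s r m := by
    intro F
    have hbdd : BddAbove (Set.range fun m => ‖φ m F‖ * cornerWeight p s r m) :=
      ⟨‖F‖, by rintro _ ⟨m, rfl⟩; exact hφb m F⟩
    have hS0 : 0 ≤ ⨆ m : Fin n → ℤ, ‖φ m F‖ * cornerWeight p s r m :=
      le_trans (mul_nonneg (norm_nonneg _)
        (cornerWeight_pos (p := p) (s := s) (r := r) (fun _ => 0)).le)
        (le_ciSup hbdd (fun _ => 0))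
    refine le_antisymm ?_ (Real.iSup_le (fun m => hφb m F) (norm_nonneg F))
    refine le_of_forall_pos_le_add ?_
    intro ε hε
    obtain ⟨f, hf⟩ := approx F ε hε
    set S := ⨆ m : Fin n → ℤ, ‖φ m F‖ * cornerWeight p s r m with hSdef
    have h1 : ‖F‖ ≤ max ‖F - C.emb f‖ ‖C.emb f‖ := by
      have := hnonarch (F - C.emb f) (C.emb f)
      rwa [sub_add_cancel] at this
    have h2 : ‖C.emb f‖ ≤ max ‖F - C.emb f‖ S := by
      rw [C.isometric]
      refine Real.iSup_le (fun c => ?_) (le_max_of_le_right hS0)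
      refine Real.iSup_le (fun m => ?_) (le_max_of_le_right hS0)
      have hw := (cornerWeight_pos (p := p) (s := s) (r := r) m).le
      have hna : ‖f.coeff m‖ ≤ max ‖f.coeff m - φ m F‖ ‖φ m F‖ := by
        have := Padic.nonarchimedean (f.coeff m - φ m F) (φ m F)
        rwa [sub_add_cancel] at this
      calc ‖f.coeff m‖ * gaussWeight p (corner s r c) m
          ≤ ‖f.coeff m‖ * cornerWeight p s r m :=
            mul_le_mul_of_nonneg_left (gaussWeight_le_cornerWeight c m) (norm_nonneg _)
        _ ≤ max ‖f.coeff m - φ m F‖ ‖φ m F‖ * cornerWeight p s r m :=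
            mul_le_mul_of_nonneg_right hna hw
        _ = max (‖f.coeff m - φ m F‖ * cornerWeight p s r m)
              (‖φ m F‖ * cornerWeight p s r m) := max_mul_of_nonneg _ _ hw
        _ ≤ max ‖F - C.emb f‖ S := by
            refine max_le_max ?_ (le_ciSup hbdd m)
            have : ‖f.coeff m - φ m F‖ = ‖φ m F - f.coeff m‖ := norm_sub_rev _ _
            rw [this]
            exact hkey F f m
    have h3 : ‖F‖ ≤ max ‖F - C.emb f‖ (max ‖F - C.emb f‖ S) := le_trans h1 (by
      exact max_le_max (le_refl _) h2)
    have h4 : max ‖F - C.emb f‖ (max ‖F - C.emb f‖ S) ≤ S + ε := by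
      have hd : ‖F - C.emb f‖ ≤ S + ε := le_trans hf.le (le_add_of_nonneg_left hS0)
      exact max_le hd (max_le hd (le_add_of_nonneg_right hε.le))
    exact le_trans h3 h4
  -- assembling the statement
  refine ⟨fun F => ⟨fun m => φ m F, ⟨tendsto_a F, hasSum_a F⟩, ?_⟩, ?_⟩
  · intro b hb
    funext m
    exact coeff_eq F b hb.2 m
  · intro F a _ ha
    have h : a = fun m => φ m F := funext (fun m => coeff_eq F a ha m)
    rw [h]
    exact norm_eq F
end

section
/- Fix 1 ≤ α ≤ n and a tuple r = (r_1,…,r_n) of positive reals with r_α ≤ 1. For every polynomial f ∈ ℚ_p[T_1,…,T_n] one has ‖ f(T_1,…,T_{α−1}, (1+T_α)^p − 1, T_{α+1},…,T_n) ‖_r = ‖ f ‖_{r'}, where r'_β = r_β for β ≠ α and r'_α = p·r_α. -/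
open scoped BigOperators

/-- The Gauss norm `‖Σ aₘ Tᵐ‖_t` on the polynomial ring `ℚ_p[T₁,…,Tₙ]`. -/
noncomputable def polyGaussNorm (p : ℕ) [Fact p.Prime] {n : ℕ} (t : Fin n → ℝ)
    (f : MvPolynomial (Fin n) ℚ_[p]) : ℝ :=
  ⨆ m : Fin n →₀ ℕ, ‖MvPolynomial.coeff m f‖ * gaussWeight p t (fun α => (m α : ℤ))

/-- The `ℚ_p`-algebra endomorphism of `ℚ_p[T₁,…,Tₙ]` sending `T_α` to `(1+T_α)^p − 1`
and fixing the other variables. -/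
noncomputable def frobSubst (p : ℕ) [Fact p.Prime] {n : ℕ} (α : Fin n) :
    MvPolynomial (Fin n) ℚ_[p] →ₐ[ℚ_[p]] MvPolynomial (Fin n) ℚ_[p] :=
  MvPolynomial.aeval
    (fun β => if β = α then (1 + MvPolynomial.X α) ^ p - 1 else MvPolynomial.X β)

namespace FrobSubstAux

open Polynomial

variable (p : ℕ) [hp : Fact p.Prime]

lemma p_posR : (0:ℝ) < p := by exact_mod_cast (Fact.out (p := p.Prime)).pos
lemma one_lt_pR : (1:ℝ) < p := by exact_mod_cast (Fact.out (p := p.Prime)).one_lt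

/-- exponential helper `E x = p^(x/(p-1))`. -/
noncomputable def E (x : ℝ) : ℝ := (p:ℝ) ^ (x / ((p:ℝ) - 1))

lemma E_pos (x : ℝ) : 0 < E p x := Real.rpow_pos_of_pos (p_posR p) _

lemma E_mono {x y : ℝ} (h : x ≤ y) : E p x ≤ E p y :=
  Real.rpow_le_rpow_of_exponent_le (le_of_lt (one_lt_pR p))
    (div_le_div_of_nonneg_right h (by linarith [one_lt_pR p]) |>.trans_eq rfl)

lemma E_mul (x y : ℝ) : E p x * E p y = E p (x + y) := by
  rw [E, E, E, ← Real.rpow_add (p_posR p), ← add_div]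

omit hp in
lemma E_zero : E p 0 = 1 := by simp [E]

noncomputable def q : Polynomial ℚ_[p] := (1 + X) ^ p - 1

lemma onePlusX_monic : (1 + X : Polynomial ℚ_[p]).Monic := by
  simpa [add_comm] using monic_X_add_C (1 : ℚ_[p])

lemma pow_natDegree : ((1 + X : Polynomial ℚ_[p]) ^ p).natDegree = p := by
  rw [(onePlusX_monic p).natDegree_pow,
    show (1 + X : Polynomial ℚ_[p]) = X + C 1 by rw [C_1, add_comm],
    natDegree_X_add_C, mul_one]

lemma q_monic : (q p).Monic := by
  have h1 : ((1 + X : Polynomial ℚ_[p]) ^ p).Monic := (onePlusX_monic p).pow p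
  refine h1.sub_of_left ?_
  rw [degree_one, degree_eq_natDegree h1.ne_zero, pow_natDegree]
  exact_mod_cast (Fact.out (p := p.Prime)).pos

lemma q_natDegree : (q p).natDegree = p := by
  have hq : q p = (1 + X : Polynomial ℚ_[p]) ^ p - C 1 := by rw [C_1, q]
  rw [hq, natDegree_sub_C, pow_natDegree]

/-- coefficients of q -/
lemma q_coeff (k : ℕ) : (q p).coeff k = (p.choose k : ℚ_[p]) - if k = 0 then 1 else 0 := by
  rw [q, coeff_sub, coeff_one_add_X_pow, coeff_one]

lemma norm_q_coeff_le (k : ℕ) : ‖(q p).coeff k‖ ≤ E p ((k : ℝ) - p) := by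
  rcases Nat.eq_zero_or_pos k with rfl | hk
  · simp [q_coeff]
    exact le_of_lt (E_pos p _)
  rcases lt_trichotomy k p with hkp | rfl | hkp
  · -- 0 < k < p : coefficient is `p.choose k`, divisible by p
    rw [q_coeff, if_neg hk.ne', sub_zero]
    have hdvd : (p:ℤ) ∣ (p.choose k : ℤ) :=
      Int.natCast_dvd_natCast.2
        (Nat.Prime.dvd_choose_self (Fact.out (p := p.Prime)) hk.ne' hkp)
    have h1 : ‖((p.choose k : ℤ) : ℚ_[p])‖ ≤ (p:ℝ) ^ (-(1:ℕ) : ℤ) := by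
      rw [Padic.norm_int_le_pow_iff_dvd]
      simpa using hdvd
    have h2 : ‖(p.choose k : ℚ_[p])‖ ≤ (p:ℝ) ^ (-1 : ℝ) := by
      rw [show ((p.choose k : ℚ_[p])) = ((p.choose k : ℤ) : ℚ_[p]) by push_cast; ring]
      calc ‖((p.choose k : ℤ) : ℚ_[p])‖ ≤ (p:ℝ) ^ (-(1:ℕ) : ℤ) := h1
        _ = (p:ℝ) ^ (-1 : ℝ) := by
          rw [← Real.rpow_intCast]; norm_num
    refine h2.trans ?_
    rw [E]
    apply Real.rpow_le_rpow_of_exponent_le (le_of_lt (one_lt_pR p))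
    rw [le_div_iff₀ (by linarith [one_lt_pR p] : (0:ℝ) < (p:ℝ) - 1)]
    have hk1 : (1:ℝ) ≤ (k:ℝ) := by exact_mod_cast hk
    linarith
  · -- k = p
    rw [q_coeff, if_neg hk.ne', sub_zero, Nat.choose_self]
    simp [E]
  · -- k > p
    rw [q_coeff, if_neg hk.ne', sub_zero, Nat.choose_eq_zero_of_lt hkp]
    simp [le_of_lt (E_pos p _)]

/-- coefficients of `q^j`. -/
noncomputable def c (j d : ℕ) : ℚ_[p] := ((q p) ^ j).coeff d

lemma qpow_natDegree (j : ℕ) : ((q p) ^ j).natDegree = j * p := by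
  rw [(q_monic p).natDegree_pow, q_natDegree]

lemma c_diag (j : ℕ) : c p j (p * j) = 1 := by
  rw [c, mul_comm, ← qpow_natDegree p j, Polynomial.coeff_natDegree]
  exact ((q_monic p).pow j).leadingCoeff

lemma c_zero {j d : ℕ} (h : p * j < d) : c p j d = 0 := by
  apply Polynomial.coeff_eq_zero_of_natDegree_lt
  rw [qpow_natDegree, mul_comm]; omega

lemma norm_sum_le {ι : Type*} (s : Finset ι) (g : ι → ℚ_[p]) (B : ℝ) (hB : 0 ≤ B)
    (h : ∀ i ∈ s, ‖g i‖ ≤ B) : ‖∑ i ∈ s, g i‖ ≤ B := by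
  classical
  induction s using Finset.cons_induction with
  | empty => simpa using hB
  | cons a s ha ih =>
      rw [Finset.sum_cons]
      refine le_trans (Padic.nonarchimedean _ _) (max_le (h a (Finset.mem_cons_self a s))
        (ih fun i hi => h i (Finset.mem_cons_of_mem hi)))

lemma norm_sum_lt {ι : Type*} (s : Finset ι) (g : ι → ℚ_[p]) (B : ℝ) (hB : 0 < B)
    (h : ∀ i ∈ s, ‖g i‖ < B) : ‖∑ i ∈ s, g i‖ < B := by
  classical
  induction s using Finset.cons_induction with
  | empty => simpa using hB
  | cons a s ha ih =>
      rw [Finset.sum_cons]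
      refine lt_of_le_of_lt (Padic.nonarchimedean _ _) (max_lt (h a (Finset.mem_cons_self a s))
        (ih fun i hi => h i (Finset.mem_cons_of_mem hi)))

lemma c_bound (j d : ℕ) : ‖c p j d‖ ≤ E p ((d : ℝ) - (p * j : ℕ)) := by
  induction j generalizing d with
  | zero =>
      rcases Nat.eq_zero_or_pos d with rfl | hd
      · simp [c, E]
      · have : c p 0 d = 0 := by simp [c, Polynomial.coeff_one, hd.ne']
        rw [this]; simpa using le_of_lt (E_pos p _)
  | succ j ih =>
      have hc : c p (j+1) d = ∑ x ∈ Finset.HasAntidiagonal.antidiagonal d, ((q p)^j).coeff x.1 * (q p).coeff x.2 := by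
        rw [c, pow_succ, Polynomial.coeff_mul]
      rw [hc]
      apply norm_sum_le p _ _ _ (le_of_lt (E_pos p _))
      intro x hx
      have hsum : x.1 + x.2 = d := Finset.HasAntidiagonal.mem_antidiagonal.1 hx
      rw [norm_mul]
      calc ‖((q p)^j).coeff x.1‖ * ‖(q p).coeff x.2‖
          ≤ E p ((x.1 : ℝ) - (p * j : ℕ)) * E p ((x.2 : ℝ) - p) :=
            mul_le_mul (ih x.1) (norm_q_coeff_le p x.2) (norm_nonneg _) (le_of_lt (E_pos p _))
        _ = E p ((d : ℝ) - (p * (j+1) : ℕ)) := by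
            rw [E_mul]
            congr 1
            have : (x.1 : ℝ) + x.2 = d := by exact_mod_cast hsum
            push_cast
            linarith

section Mv

open MvPolynomial

variable {n : ℕ} (α : Fin n)

lemma frobSubst_monomial (m' : Fin n →₀ ℕ) (a : ℚ_[p]) :
    frobSubst p α (monomial m' a) =
      ∑ e ∈ Finset.range (p * m' α + 1), monomial (m'.update α e) (a * c p (m' α) e) := by
  classical
  have hQ : ((1 + X α : MvPolynomial (Fin n) ℚ_[p]) ^ p - 1) ^ (m' α)
      = ∑ e ∈ Finset.range (p * m' α + 1), MvPolynomial.C (c p (m' α) e) * (X α) ^ e := by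
    have hdeg : ((q p) ^ (m' α)).natDegree < p * m' α + 1 := by
      rw [qpow_natDegree, mul_comm]; omega
    have h2 : (Polynomial.aeval (X α : MvPolynomial (Fin n) ℚ_[p])) ((q p) ^ (m' α))
        = ((1 + X α) ^ p - 1) ^ (m' α) := by
      rw [map_pow]; congr 1
      rw [q, map_sub, map_pow, map_add, map_one, Polynomial.aeval_X]
    rw [← h2, Polynomial.aeval_eq_sum_range' hdeg]
    refine Finset.sum_congr rfl fun e he => ?_
    rw [MvPolynomial.smul_eq_C_mul]
    rfl
  have hprod : (m'.prod fun i k =>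
        (if i = α then (1 + X α : MvPolynomial (Fin n) ℚ_[p]) ^ p - 1 else X i) ^ k)
      = ((1 + X α) ^ p - 1) ^ (m' α) * monomial (m'.erase α) 1 := by
    rw [← Finsupp.mul_prod_erase' m' α _ (fun i => pow_zero _), if_pos rfl,
      MvPolynomial.monomial_eq, MvPolynomial.C_1, one_mul]
    congr 1
    refine Finsupp.prod_congr fun i hi => ?_
    have hiα : i ≠ α := by
      have h := Finsupp.support_erase (a := α) (f := m') ▸ hi
      exact (Finset.mem_erase.1 h).1
    rw [if_neg hiα]
  rw [frobSubst, MvPolynomial.aeval_monomial, MvPolynomial.algebraMap_eq, hprod, hQ,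
    Finset.sum_mul, Finset.mul_sum]
  refine Finset.sum_congr rfl fun e he => ?_
  rw [mul_assoc, MvPolynomial.X_pow_eq_monomial, MvPolynomial.monomial_mul, one_mul,
    ← Finsupp.update_eq_single_add_erase, MvPolynomial.C_mul_monomial, mul_one,
    MvPolynomial.C_mul_monomial]

lemma coeff_frobSubst_monomial (m' m : Fin n →₀ ℕ) (a : ℚ_[p]) :
    coeff m (frobSubst p α (monomial m' a)) =
      if m'.update α (m α) = m then a * c p (m' α) (m α) else 0 := by
  classical
  rw [frobSubst_monomial, MvPolynomial.coeff_sum]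
  simp only [MvPolynomial.coeff_monomial]
  by_cases hle : m α ∈ Finset.range (p * m' α + 1)
  · refine Finset.sum_eq_single_of_mem (m α) hle fun e he hne => ?_
    rw [if_neg]
    intro hEq
    apply hne
    rw [← hEq]
    simp [Finsupp.coe_update]
  · have h0 : ∀ e ∈ Finset.range (p * m' α + 1),
        (if m'.update α e = m then a * c p (m' α) e else 0) = 0 := by
      intro e he
      rw [if_neg]
      intro hEq
      apply hle
      have hme : m α = e := by rw [← hEq]; simp [Finsupp.coe_update]
      rw [hme]; exact he
    rw [Finset.sum_eq_zero h0]
    have hc0 : c p (m' α) (m α) = 0 := by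
      apply c_zero
      simp only [Finset.mem_range, not_lt] at hle
      omega
    rw [hc0, mul_zero, ite_self]

lemma coeff_frobSubst (f : MvPolynomial (Fin n) ℚ_[p]) (m : Fin n →₀ ℕ) :
    coeff m (frobSubst p α f) =
      ∑ m' ∈ f.support, if m'.update α (m α) = m then coeff m' f * c p (m' α) (m α) else 0 := by
  classical
  conv_lhs => rw [f.as_sum, map_sum, MvPolynomial.coeff_sum]
  exact Finset.sum_congr rfl fun m' _ => coeff_frobSubst_monomial p α m' m (coeff m' f)

lemma gaussWeight_eq (t : Fin n → ℝ) (m : Fin n →₀ ℕ) :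
    gaussWeight p t (fun β => (m β : ℤ)) = E p (-(∑ β, t β * (m β : ℝ))) := by
  rw [gaussWeight, E]
  push_cast
  ring_nf

omit hp in
lemma gaussWeight_pos (t : Fin n → ℝ) (mm : Fin n → ℤ) (hp0 : 0 < p) :
    0 < gaussWeight p t mm :=
  Real.rpow_pos_of_pos (by exact_mod_cast hp0) _

omit hp in
lemma sum_update (t : Fin n → ℝ) (m : Fin n →₀ ℕ) (e : ℕ) :
    ∑ β, t β * ((m.update α e) β : ℝ)
      = t α * e + ∑ β ∈ Finset.univ.erase α, t β * (m β : ℝ) := by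
  classical
  rw [← Finset.add_sum_erase _ _ (Finset.mem_univ α)]
  congr 1
  · congr 1
    simp [Finsupp.coe_update]
  · refine Finset.sum_congr rfl fun β hβ => ?_
    have hβα : β ≠ α := (Finset.mem_erase.1 hβ).1
    simp [Finsupp.coe_update, Function.update_of_ne hβα]

omit hp in
lemma sum_self (t : Fin n → ℝ) (m : Fin n →₀ ℕ) :
    ∑ β, t β * (m β : ℝ)
      = t α * (m α) + ∑ β ∈ Finset.univ.erase α, t β * (m β : ℝ) := by
  have h := sum_update α t m (m α)
  rwa [Finsupp.update_self] at h

omit hp in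
lemma sum_rprime (r : Fin n → ℝ) (w : ℝ) (m : Fin n →₀ ℕ) :
    ∑ β, (Function.update r α w) β * (m β : ℝ)
      = w * (m α) + ∑ β ∈ Finset.univ.erase α, r β * (m β : ℝ) := by
  classical
  rw [← Finset.add_sum_erase _ _ (Finset.mem_univ α)]
  congr 1
  · rw [Function.update_self]
  · exact Finset.sum_congr rfl fun β hβ => by
      rw [Function.update_of_ne (Finset.mem_erase.1 hβ).1]

lemma bddAbove_range (t : Fin n → ℝ) (f : MvPolynomial (Fin n) ℚ_[p]) :
    BddAbove (Set.range fun m : Fin n →₀ ℕ =>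
      ‖coeff m f‖ * gaussWeight p t (fun β => (m β : ℤ))) := by
  classical
  apply Set.Finite.bddAbove
  apply Set.Finite.subset (Set.Finite.insert 0 (f.support.finite_toSet.image
    (fun m : Fin n →₀ ℕ => ‖coeff m f‖ * gaussWeight p t (fun β => (m β : ℤ)))))
  rintro x ⟨m, rfl⟩
  by_cases hm : m ∈ f.support
  · exact Set.mem_insert_iff.2 (Or.inr ⟨m, hm, rfl⟩)
  · have h0 : ‖MvPolynomial.coeff m f‖ * gaussWeight p t (fun β => (m β : ℤ)) = 0 := by
      rw [MvPolynomial.notMem_support_iff.1 hm, norm_zero, zero_mul]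
    exact Set.mem_insert_iff.2 (Or.inl h0)

lemma le_norm (t : Fin n → ℝ) (f : MvPolynomial (Fin n) ℚ_[p]) (m : Fin n →₀ ℕ) :
    ‖coeff m f‖ * gaussWeight p t (fun β => (m β : ℤ)) ≤ polyGaussNorm p t f :=
  le_ciSup (bddAbove_range p t f) m

lemma norm_nonneg' (t : Fin n → ℝ) (f : MvPolynomial (Fin n) ℚ_[p]) :
    0 ≤ polyGaussNorm p t f := by
  refine le_trans ?_ (le_norm p t f 0)
  have := gaussWeight_pos (p := p) t (fun β => ((0 : Fin n →₀ ℕ) β : ℤ))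
    (Fact.out (p := p.Prime)).pos
  positivity

lemma norm_zero' (t : Fin n → ℝ) : polyGaussNorm p t (0 : MvPolynomial (Fin n) ℚ_[p]) = 0 := by
  have : ∀ m : Fin n →₀ ℕ,
      ‖coeff m (0 : MvPolynomial (Fin n) ℚ_[p])‖ * gaussWeight p t (fun β => (m β : ℤ)) = 0 := by
    intro m; simp
  rw [polyGaussNorm]
  simp only [this]
  exact ciSup_const

lemma exists_attain (t : Fin n → ℝ) (f : MvPolynomial (Fin n) ℚ_[p])
    (hpos : 0 < polyGaussNorm p t f) :
    ∃ m ∈ f.support,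
      ‖coeff m f‖ * gaussWeight p t (fun β => (m β : ℤ)) = polyGaussNorm p t f := by
  classical
  set g := fun m : Fin n →₀ ℕ => ‖coeff m f‖ * gaussWeight p t (fun β => (m β : ℤ)) with hg
  have hfin : (Set.range g).Finite := by
    apply Set.Finite.subset (Set.Finite.insert 0 (f.support.finite_toSet.image g))
    rintro x ⟨m, rfl⟩
    by_cases hm : m ∈ f.support
    · exact Set.mem_insert_iff.2 (Or.inr ⟨m, hm, rfl⟩)
    · have h0 : g m = 0 := by
        rw [hg]
        simp only
        rw [MvPolynomial.notMem_support_iff.1 hm, norm_zero, zero_mul]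
      exact Set.mem_insert_iff.2 (Or.inl h0)
  have hne : (Set.range g).Nonempty := ⟨g 0, ⟨0, rfl⟩⟩
  have hmem : polyGaussNorm p t f ∈ Set.range g := hne.csSup_mem hfin
  obtain ⟨m, hm⟩ := hmem
  refine ⟨m, ?_, hm⟩
  rw [MvPolynomial.mem_support_iff]
  intro h0
  rw [hg] at hm
  simp only [h0, norm_zero, zero_mul] at hm
  rw [← hm] at hpos
  exact absurd hpos (lt_irrefl 0)

lemma key_le (r : Fin n → ℝ) (hrα : r α ≤ 1) (m' m : Fin n →₀ ℕ)
    (h : m'.update α (m α) = m) :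
    ‖c p (m' α) (m α)‖ * gaussWeight p r (fun β => (m β : ℤ))
      ≤ gaussWeight p (Function.update r α ((p:ℝ) * r α)) (fun β => (m' β : ℤ)) := by
  have hsum1 : ∑ β, r β * (m β : ℝ)
      = r α * (m α) + ∑ β ∈ Finset.univ.erase α, r β * (m' β : ℝ) := by
    have h2 := sum_update α r m' (m α)
    rw [h] at h2
    exact h2
  rw [gaussWeight_eq, gaussWeight_eq, hsum1, sum_rprime]
  set S := ∑ β ∈ Finset.univ.erase α, r β * (m' β : ℝ) with hS
  set j := m' α
  set d := m α
  by_cases hd : d ≤ p * j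
  · calc ‖c p j d‖ * E p (-(r α * d + S))
        ≤ E p ((d : ℝ) - (p * j : ℕ)) * E p (-(r α * d + S)) :=
          mul_le_mul_of_nonneg_right (c_bound p j d) (E_pos p _).le
      _ ≤ E p (r α * ((d : ℝ) - (p * j : ℕ))) * E p (-(r α * d + S)) := by
          apply mul_le_mul_of_nonneg_right _ (E_pos p _).le
          apply E_mono
          have hd' : ((d : ℝ) - (p * j : ℕ)) ≤ 0 := by
            have : (d:ℝ) ≤ ((p * j : ℕ) : ℝ) := by exact_mod_cast hd
            linarith
          nlinarith
      _ = E p (-((p:ℝ) * r α * j + S)) := by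
          rw [E_mul]
          congr 1
          push_cast
          ring
  · rw [c_zero p (not_le.mp hd), norm_zero, zero_mul]
    exact (E_pos p _).le

end Mv

end FrobSubstAux

open FrobSubstAux MvPolynomial in
/-- For `0 < r` with `r_α ≤ 1`, substituting `(1+T_α)^p − 1` for `T_α` transforms the Gauss
norm `‖·‖_{r'}` (with `r'_α = p·r_α` and `r'_β = r_β` for `β ≠ α`) into `‖·‖_r`:
`‖f(…,(1+T_α)^p−1,…)‖_r = ‖f‖_{r'}` for every polynomial `f`. -/
theorem polyGaussNorm_frobSubst
    (p : ℕ) [Fact p.Prime] (n : ℕ) (α : Fin n) (r : Fin n → ℝ)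
    (hr : ∀ β, 0 < r β) (hrα : r α ≤ 1) (f : MvPolynomial (Fin n) ℚ_[p]) :
    polyGaussNorm p r (frobSubst p α f) =
      polyGaussNorm p (Function.update r α ((p : ℝ) * r α)) f := by
  classical
  have hp0 : 0 < p := (Fact.out (p := p.Prime)).pos
  set r' := Function.update r α ((p : ℝ) * r α) with hr'def
  set N := polyGaussNorm p r' f with hNdef
  have hN0 : 0 ≤ N := norm_nonneg' p r' f
  -- the easy direction: `‖frobSubst f‖_r ≤ ‖f‖_{r'}`
  have hle : polyGaussNorm p r (frobSubst p α f) ≤ N := by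
    apply ciSup_le
    intro m
    rw [coeff_frobSubst]
    set W := gaussWeight p r fun β => (m β : ℤ) with hW
    have hWpos : 0 < W := gaussWeight_pos p r _ hp0
    have hsum : ‖∑ m' ∈ f.support,
        if m'.update α (m α) = m then coeff m' f * c p (m' α) (m α) else 0‖ ≤ N / W := by
      apply norm_sum_le p _ _ _ (div_nonneg hN0 hWpos.le)
      intro m' hm'
      by_cases hcond : m'.update α (m α) = m
      · rw [if_pos hcond, norm_mul, le_div_iff₀ hWpos]
        calc ‖coeff m' f‖ * ‖c p (m' α) (m α)‖ * W
            = ‖coeff m' f‖ * (‖c p (m' α) (m α)‖ * W) := by ring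
          _ ≤ ‖coeff m' f‖ * gaussWeight p r' (fun β => (m' β : ℤ)) :=
              mul_le_mul_of_nonneg_left (key_le p α r hrα m' m hcond) (norm_nonneg _)
          _ ≤ N := le_norm p r' f m'
      · rw [if_neg hcond, norm_zero]
        exact div_nonneg hN0 hWpos.le
    calc ‖∑ m' ∈ f.support,
        if m'.update α (m α) = m then coeff m' f * c p (m' α) (m α) else 0‖ * W
        ≤ (N / W) * W := mul_le_mul_of_nonneg_right hsum hWpos.le
      _ = N := div_mul_cancel₀ _ hWpos.ne'
  rcases eq_or_lt_of_le hN0 with hN | hN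
  · -- degenerate case `N = 0`, i.e. `f = 0`
    have hf : f = 0 := by
      apply MvPolynomial.ext
      intro m
      have h1 := le_norm p r' f m
      rw [← hNdef, ← hN] at h1
      have h2 : 0 < gaussWeight p r' (fun β => (m β : ℤ)) := gaussWeight_pos p r' _ hp0
      have h3 : ‖coeff m f‖ ≤ 0 := by nlinarith [norm_nonneg (coeff m f)]
      simpa using le_antisymm h3 (norm_nonneg _)
    rw [hf, map_zero, norm_zero', hNdef, hf, norm_zero']
  · -- main case `N > 0`
    obtain ⟨m₁, hm₁s, hm₁⟩ := exists_attain p r' f hN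
    set s := f.support.filter
      (fun m => ‖coeff m f‖ * gaussWeight p r' (fun β => (m β : ℤ)) = N) with hsdef
    have hs : s.Nonempty := ⟨m₁, Finset.mem_filter.2 ⟨hm₁s, hm₁⟩⟩
    obtain ⟨m₀, hm₀s, hmax⟩ := Finset.exists_max_image s (fun m => m α) hs
    obtain ⟨hm₀sup, hm₀N⟩ := Finset.mem_filter.1 hm₀s
    have hC0 : coeff m₀ f ≠ 0 := MvPolynomial.mem_support_iff.1 hm₀sup
    have hC0pos : 0 < ‖coeff m₀ f‖ := norm_pos_iff.2 hC0
    set k := m₀ α with hk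
    set ms := m₀.update α (p * k) with hms
    have hmsα : ms α = p * k := by simp [hms, Finsupp.coe_update]
    set W0 := gaussWeight p r' (fun β => (m₀ β : ℤ)) with hW0
    have hW0pos : 0 < W0 := gaussWeight_pos p r' _ hp0
    have hWeq : gaussWeight p r (fun β => (ms β : ℤ)) = W0 := by
      rw [hW0, gaussWeight_eq, gaussWeight_eq, hms, sum_update, sum_rprime]
      congr 2
      push_cast
      ring
    have hcoeff : ‖coeff ms (frobSubst p α f)‖ = ‖coeff m₀ f‖ := by
      rw [coeff_frobSubst, ← Finset.add_sum_erase _ _ hm₀sup]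
      have hmain : (if m₀.update α (ms α) = ms then coeff m₀ f * c p (m₀ α) (ms α) else 0)
          = coeff m₀ f := by
        rw [hmsα, if_pos rfl, ← hk, c_diag, mul_one]
      rw [hmain]
      have hrest : ‖∑ m' ∈ f.support.erase m₀,
          if m'.update α (ms α) = ms then coeff m' f * c p (m' α) (ms α) else 0‖
          < ‖coeff m₀ f‖ := by
        apply norm_sum_lt p _ _ _ hC0pos
        intro m' hm'
        have hne : m' ≠ m₀ := (Finset.mem_erase.1 hm').1
        have hm'sup : m' ∈ f.support := (Finset.mem_erase.1 hm').2
        by_cases hcond : m'.update α (ms α) = ms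
        · rw [if_pos hcond]
          have hoff : ∀ β, β ≠ α → m' β = m₀ β := by
            intro β hβ
            have h1 : (m'.update α (ms α)) β = ms β := by rw [hcond]
            rw [hms] at h1
            simpa [Finsupp.coe_update, Function.update_of_ne hβ] using h1
          set j := m' α with hj
          have hjk : j ≠ k := by
            intro hEq
            apply hne
            ext β
            by_cases hβ : β = α
            · rw [hβ, ← hj, hEq, hk]
            · exact hoff β hβ
          rcases hjk.lt_or_gt with hjlt | hjgt
          · rw [hmsα, c_zero p ((Nat.mul_lt_mul_left hp0).2 hjlt), mul_zero, norm_zero]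
            exact hC0pos
          · -- j > k : use strict maximality
            have hterm_lt : ‖coeff m' f‖ * gaussWeight p r' (fun β => (m' β : ℤ)) < N := by
              rcases lt_or_eq_of_le (le_norm p r' f m') with h | h
              · exact h
              · exfalso
                have hm's : m' ∈ s := Finset.mem_filter.2 ⟨hm'sup, h⟩
                have hle' := hmax m' hm's
                rw [← hj] at hle'
                exact absurd hle' (not_le.2 hjgt)
            have hcb : ‖c p j (p * k)‖ * W0 ≤ gaussWeight p r' (fun β => (m' β : ℤ)) := by
              rw [hW0, gaussWeight_eq, gaussWeight_eq, sum_rprime, sum_rprime]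
              have hSeq : ∑ β ∈ Finset.univ.erase α, r β * ((m' β : ℕ) : ℝ)
                  = ∑ β ∈ Finset.univ.erase α, r β * ((m₀ β : ℕ) : ℝ) := by
                refine Finset.sum_congr rfl fun β hβ => ?_
                rw [hoff β (Finset.mem_erase.1 hβ).1]
              rw [hSeq]
              set S := ∑ β ∈ Finset.univ.erase α, r β * ((m₀ β : ℕ) : ℝ) with hSd
              calc ‖c p j (p * k)‖ * E p (-((p:ℝ) * r α * (m₀ α) + S))
                  ≤ E p (((p * k : ℕ) : ℝ) - ((p * j : ℕ) : ℝ))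
                      * E p (-((p:ℝ) * r α * (m₀ α) + S)) := by
                    apply mul_le_mul_of_nonneg_right _ (E_pos p _).le
                    exact c_bound p j (p * k)
                _ = E p (((p * k : ℕ) : ℝ) - ((p * j : ℕ) : ℝ)
                      - ((p:ℝ) * r α * (m₀ α) + S)) := by rw [E_mul]; congr 1; try ring
                _ ≤ E p (-((p:ℝ) * r α * (m' α) + S)) := by
                    apply E_mono
                    have hkj : (k:ℝ) < (j:ℝ) := by exact_mod_cast hjgt
                    have hrα1 : r α ≤ 1 := hrα
                    have hppos : (0:ℝ) < p := by exact_mod_cast hp0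
                    rw [← hk, ← hj]
                    push_cast
                    nlinarith [mul_nonneg (mul_nonneg hppos.le (sub_nonneg.2 hrα1))
                      (sub_nonneg.2 hkj.le)]
            rw [hmsα, norm_mul]
            have h1 : ‖coeff m' f‖ * ‖c p j (p * k)‖ * W0
                ≤ ‖coeff m' f‖ * gaussWeight p r' (fun β => (m' β : ℤ)) := by
              rw [mul_assoc]
              exact mul_le_mul_of_nonneg_left hcb (norm_nonneg _)
            have h2 : ‖coeff m' f‖ * ‖c p j (p * k)‖ * W0 < ‖coeff m₀ f‖ * W0 := by
              rw [← hm₀N] at hterm_lt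
              exact lt_of_le_of_lt h1 hterm_lt
            exact lt_of_mul_lt_mul_right h2 hW0pos.le
        · rw [if_neg hcond, norm_zero]
          exact hC0pos
      rw [Padic.add_eq_max_of_ne hrest.ne', max_eq_left hrest.le]
    have hterm : ‖coeff ms (frobSubst p α f)‖ * gaussWeight p r (fun β => (ms β : ℤ)) = N := by
      rw [hcoeff, hWeq]
      exact hm₀N
    have hge : N ≤ polyGaussNorm p r (frobSubst p α f) := by
      rw [← hterm]
      exact le_norm p r (frobSubst p α f) ms
    exact le_antisymm hle hge
end

section
/- Let K be a complete field with a nontrivial nonarchimedean absolute value (for example K = ℚ_p), let H be a unital Banach K-algebra (not necessarily commutative), and let M be a Banach K-space equipped with a left H-module structure satisfying ‖h·m‖ ≤ ‖h‖·‖m‖ for all h ∈ H, m ∈ M. Suppose M is generated as a left H-module by elements f_1,…,f_n ∈ M. Then there exists ε > 0 such that for any elements f_1',…,f_n' ∈ M with ‖f_i − f_i'‖ < ε for all i = 1,…,n, the elements f_1',…,f_n' also generate M as a left H-module. -/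
open Set Finset

section AuxRenorm

variable (K : Type*) [NontriviallyNormedField K]
variable (H : Type*) [NormedRing H] [NormedAlgebra K H]
variable (M : Type*) [NormedAddCommGroup M] [Module H M]

/-- Type synonym for `M`, to be equipped with an equivalent norm making it a
normed `K`-space via `algebraMap K H`. -/
def SpanPerturbAux.MR (K : Type*) (H : Type*) (M : Type*) : Type _ := M

namespace SpanPerturbAux

/-- Identity map into the synonym. -/
def MR.of : M → MR K H M := id

instance : AddCommGroup (MR K H M) := inferInstanceAs (AddCommGroup M)

noncomputable instance : Module K (MR K H M) := Module.compHom M (algebraMap K H)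

lemma MR.smul_def (c : K) (m : MR K H M) :
    c • m = MR.of K H M ((algebraMap K H c) • (show M from m)) := rfl

/-- The new norm on `M`. -/
noncomputable def auxNorm (m : M) : ℝ :=
  sSup (Set.range fun c : Kˣ => ‖(algebraMap K H (c : K)) • m‖ / ‖(c : K)‖)

variable {K H M}
variable (hcompat : ∀ (h : H) (m : M), ‖h • m‖ ≤ ‖h‖ * ‖m‖)

include hcompat

lemma aux_mem_le (m : M) (c : Kˣ) :
    ‖(algebraMap K H (c : K)) • m‖ / ‖(c : K)‖ ≤ ‖(1 : H)‖ * ‖m‖ := by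
  rw [div_le_iff₀ (by simpa using c.ne_zero : (0:ℝ) < ‖(c : K)‖)]
  calc ‖(algebraMap K H (c : K)) • m‖ ≤ ‖algebraMap K H (c : K)‖ * ‖m‖ := hcompat _ _
    _ = ‖(c : K)‖ * ‖(1 : H)‖ * ‖m‖ := by rw [norm_algebraMap]
    _ = ‖(1 : H)‖ * ‖m‖ * ‖(c : K)‖ := by ring

lemma aux_bddAbove (m : M) :
    BddAbove (Set.range fun c : Kˣ => ‖(algebraMap K H (c : K)) • m‖ / ‖(c : K)‖) :=
  ⟨‖(1 : H)‖ * ‖m‖, by rintro _ ⟨c, rfl⟩; exact aux_mem_le hcompat m c⟩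

lemma le_auxNorm (m : M) : ‖m‖ ≤ auxNorm K H M m := by
  have : ‖m‖ = ‖(algebraMap K H ((1 : Kˣ) : K)) • m‖ / ‖((1 : Kˣ) : K)‖ := by
    simp
  rw [this]
  exact le_csSup (aux_bddAbove hcompat m) ⟨1, rfl⟩

lemma auxNorm_le (m : M) : auxNorm K H M m ≤ ‖(1 : H)‖ * ‖m‖ :=
  csSup_le (Set.range_nonempty _) (by rintro _ ⟨c, rfl⟩; exact aux_mem_le hcompat m c)

lemma auxNorm_nonneg (m : M) : 0 ≤ auxNorm K H M m :=
  le_trans (norm_nonneg m) (le_auxNorm hcompat m)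

lemma auxNorm_zero : auxNorm K H M 0 = 0 :=
  le_antisymm (by simpa using auxNorm_le hcompat 0) (auxNorm_nonneg hcompat 0)

lemma auxNorm_add_le (m n : M) :
    auxNorm K H M (m + n) ≤ auxNorm K H M m + auxNorm K H M n := by
  refine csSup_le (Set.range_nonempty _) ?_
  rintro _ ⟨c, rfl⟩
  calc ‖(algebraMap K H (c : K)) • (m + n)‖ / ‖(c : K)‖
      ≤ (‖(algebraMap K H (c : K)) • m‖ + ‖(algebraMap K H (c : K)) • n‖) / ‖(c : K)‖ := by
        apply div_le_div_of_nonneg_right ?_ (by simpa using c.ne_zero) |>.trans_eq rfl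
        · rw [smul_add]; exact norm_add_le _ _
    _ = ‖(algebraMap K H (c : K)) • m‖ / ‖(c : K)‖
        + ‖(algebraMap K H (c : K)) • n‖ / ‖(c : K)‖ := add_div _ _ _
    _ ≤ auxNorm K H M m + auxNorm K H M n :=
        add_le_add (le_csSup (aux_bddAbove hcompat m) ⟨c, rfl⟩)
          (le_csSup (aux_bddAbove hcompat n) ⟨c, rfl⟩)

lemma auxNorm_neg (m : M) : auxNorm K H M (-m) = auxNorm K H M m := by
  unfold auxNorm
  congr 1
  ext r
  constructor <;> rintro ⟨c, rfl⟩ <;> exact ⟨c, by simp [smul_neg]⟩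

lemma auxNorm_smul_le (c : K) (m : M) :
    auxNorm K H M ((algebraMap K H c) • m) ≤ ‖c‖ * auxNorm K H M m := by
  rcases eq_or_ne c 0 with rfl | hc
  · simp [auxNorm_zero hcompat]
  refine csSup_le (Set.range_nonempty _) ?_
  rintro _ ⟨d, rfl⟩
  dsimp only
  have hdc : ((d * Units.mk0 c hc : Kˣ) : K) = (d : K) * c := rfl
  have hc0 : (0:ℝ) < ‖c‖ := by simpa using hc
  have hd0 : (0:ℝ) < ‖(d : K)‖ := by simpa using d.ne_zero
  have key : ‖(algebraMap K H ((d : K))) • ((algebraMap K H c) • m)‖ / ‖(d : K)‖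
      = ‖c‖ * (‖(algebraMap K H ((d * Units.mk0 c hc : Kˣ) : K)) • m‖
          / ‖((d * Units.mk0 c hc : Kˣ) : K)‖) := by
    rw [hdc, ← mul_smul, ← map_mul, norm_mul]
    field_simp
  rw [key]
  exact mul_le_mul_of_nonneg_left (le_csSup (aux_bddAbove hcompat m) ⟨_, rfl⟩) hc0.le

/-- The renormed group structure on `MR`. -/
@[reducible] noncomputable def auxNAG : NormedAddCommGroup (MR K H M) :=
  AddGroupNorm.toNormedAddCommGroup
    { toFun := fun m => auxNorm K H M (show M from m)
      map_zero' := auxNorm_zero hcompat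
      add_le' := fun a b => auxNorm_add_le hcompat _ _
      neg' := fun a => auxNorm_neg hcompat _
      eq_zero_of_map_eq_zero' := fun a ha => by
        have := (le_auxNorm hcompat (show M from a)).trans ha.le
        exact norm_le_zero_iff.1 this }

/-- The renormed space structure on `MR`. -/
noncomputable def auxNS :
    @NormedSpace K (MR K H M) _ (auxNAG (K := K) hcompat).toSeminormedAddCommGroup := by
  letI := auxNAG (K := K) hcompat
  exact ⟨fun c x => auxNorm_smul_le hcompat c (show M from x)⟩

lemma auxComplete [CompleteSpace M] :
    @CompleteSpace (MR K H M) (auxNAG (K := K) hcompat).toUniformSpace := by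
  letI := auxNAG (K := K) hcompat
  apply Metric.complete_of_cauchySeq_tendsto
  intro u hu
  have hcM : CauchySeq (fun n => (show M from u n)) := by
    rw [Metric.cauchySeq_iff] at hu ⊢
    intro ε hε
    obtain ⟨N, hN⟩ := hu ε hε
    refine ⟨N, fun a ha b hb => ?_⟩
    have h1 := hN a ha b hb
    have h2 : dist (show M from u a) (show M from u b) ≤ dist (u a) (u b) := by
      rw [dist_eq_norm, dist_eq_norm]
      exact le_auxNorm hcompat _
    exact lt_of_le_of_lt h2 h1
  obtain ⟨L, hL⟩ := cauchySeq_tendsto_of_complete hcM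
  refine ⟨MR.of K H M L, ?_⟩
  rw [tendsto_iff_dist_tendsto_zero]
  have hb : ∀ n, dist (u n) (MR.of K H M L) ≤ ‖(1:H)‖ * dist (show M from u n) L := by
    intro n
    rw [dist_eq_norm, dist_eq_norm]
    exact auxNorm_le hcompat _
  have h0 : Filter.Tendsto (fun n => ‖(1:H)‖ * dist (show M from u n) L) Filter.atTop (nhds 0) := by
    have := (tendsto_iff_dist_tendsto_zero.1 hL).const_mul ‖(1:H)‖
    simpa using this
  exact squeeze_zero (fun n => dist_nonneg) hb h0

end SpanPerturbAux

end AuxRenorm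

section KeyLemma

open SpanPerturbAux

theorem span_key
    (K : Type*) [NontriviallyNormedField K]
    (H : Type*) [NormedRing H] [NormedAlgebra K H] [CompleteSpace H]
    (M : Type*) [NormedAddCommGroup M] [Module H M] [CompleteSpace M]
    (hcompat : ∀ (h : H) (m : M), ‖h • m‖ ≤ ‖h‖ * ‖m‖)
    (k : ℕ) (f : Fin k → M) (hgen : Submodule.span H (Set.range f) = ⊤) :
    ∃ C > (0:ℝ), ∀ m : M, ∃ h : Fin k → H,
      (∑ j, h j • f j = m) ∧ ∀ j, ‖h j‖ ≤ C * ‖m‖ := by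
  letI i1 : NormedAddCommGroup (MR K H M) := auxNAG (K := K) hcompat
  letI i2 : NormedSpace K (MR K H M) := auxNS (K := K) hcompat
  letI i3 : CompleteSpace (MR K H M) := auxComplete (K := K) hcompat
  set C1 : ℝ := ‖(1:H)‖ * ∑ j, ‖f j‖ with hC1
  let lm : (Fin k → H) →ₗ[K] MR K H M :=
    { toFun := fun h => MR.of K H M (∑ j, h j • f j)
      map_add' := fun a b => by
        show (∑ j, (a j + b j) • f j : M) = (∑ j, a j • f j) + ∑ j, b j • f j
        simp [add_smul, Finset.sum_add_distrib]
      map_smul' := fun c a => by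
        show (∑ j, (c • a j) • f j : M) = (algebraMap K H c) • ∑ j, a j • f j
        rw [Finset.smul_sum]
        refine Finset.sum_congr rfl fun j _ => ?_
        rw [Algebra.smul_def, mul_smul] }
  have hbound : ∀ h : Fin k → H, ‖lm h‖ ≤ C1 * ‖h‖ := by
    intro h
    show auxNorm K H M (∑ j, h j • f j) ≤ C1 * ‖h‖
    calc auxNorm K H M (∑ j, h j • f j) ≤ ‖(1:H)‖ * ‖∑ j, h j • f j‖ := auxNorm_le hcompat _
      _ ≤ ‖(1:H)‖ * ∑ j, ‖h j • f j‖ :=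
          mul_le_mul_of_nonneg_left (norm_sum_le _ _) (norm_nonneg _)
      _ ≤ ‖(1:H)‖ * ∑ j, ‖h‖ * ‖f j‖ := by
          refine mul_le_mul_of_nonneg_left (Finset.sum_le_sum fun j _ => ?_) (norm_nonneg _)
          exact (hcompat _ _).trans
            (mul_le_mul_of_nonneg_right (norm_le_pi_norm h j) (norm_nonneg _))
      _ = C1 * ‖h‖ := by rw [← Finset.mul_sum, hC1]; ring
  let φ : (Fin k → H) →L[K] MR K H M := lm.mkContinuous C1 hbound
  have surj : Function.Surjective φ := by
    intro y
    have hy : (show M from y) ∈ Submodule.span H (Set.range f) := hgen ▸ Submodule.mem_top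
    obtain ⟨c, hc⟩ := (Submodule.mem_span_range_iff_exists_fun H).1 hy
    exact ⟨c, hc⟩
  obtain ⟨C, Cpos, hC⟩ := φ.exists_preimage_norm_le surj
  refine ⟨C * (‖(1:H)‖ + 1), mul_pos Cpos (by positivity), fun m => ?_⟩
  obtain ⟨x, hx1, hx2⟩ := hC (MR.of K H M m)
  refine ⟨x, hx1, fun j => ?_⟩
  calc ‖x j‖ ≤ ‖x‖ := norm_le_pi_norm x j
    _ ≤ C * ‖MR.of K H M m‖ := hx2
    _ ≤ C * ((‖(1:H)‖ + 1) * ‖m‖) := by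
        refine mul_le_mul_of_nonneg_left ?_ Cpos.le
        refine (auxNorm_le hcompat m).trans ?_
        exact mul_le_mul_of_nonneg_right (by linarith) (norm_nonneg _)
    _ = C * (‖(1:H)‖ + 1) * ‖m‖ := by ring

end KeyLemma

/-- **Perturbation of generating sets of Banach modules.**  Let `K` be a complete field with
a nontrivial nonarchimedean absolute value, `H` a unital (not necessarily commutative)
Banach `K`-algebra, and `M` a Banach `K`-space with a left `H`-module structure satisfying
`‖h • m‖ ≤ ‖h‖·‖m‖`.  If `M` is generated as a left `H`-module by `f 0, …, f (k-1)`, then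
there is `ε > 0` such that any tuple `f'` with `‖f i − f' i‖ < ε` for every `i` also
generates `M` as a left `H`-module. -/
theorem span_eq_top_of_small_perturbation
    (K : Type*) [NontriviallyNormedField K] [CompleteSpace K] [IsUltrametricDist K]
    (H : Type*) [NormedRing H] [NormedAlgebra K H] [CompleteSpace H]
    (M : Type*) [NormedAddCommGroup M] [NormedSpace K M] [CompleteSpace M]
    [Module H M] (hcompat : ∀ (h : H) (m : M), ‖h • m‖ ≤ ‖h‖ * ‖m‖)
    (k : ℕ) (f : Fin k → M) (hgen : Submodule.span H (Set.range f) = ⊤) :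
    ∃ ε > (0 : ℝ), ∀ f' : Fin k → M, (∀ i, ‖f i - f' i‖ < ε) →
      Submodule.span H (Set.range f') = ⊤ := by
  obtain ⟨C, hCpos, hC⟩ := span_key K H M hcompat k f hgen
  set ε : ℝ := 1 / (k * C + 1) with hε
  have hεpos : 0 < ε := by positivity
  refine ⟨ε, hεpos, fun f' hf' => ?_⟩
  choose G hG1 hG2 using fun i => hC (f i - f' i)
  have hGsmall : ∀ i j, ‖G i j‖ ≤ C * ε := fun i j =>
    (hG2 i j).trans (mul_le_mul_of_nonneg_left (hf' i).le hCpos.le)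
  -- the operator `T v i = ∑ j, G i j * v j` on `Fin k → H`
  let Tlin : (Fin k → H) →ₗ[K] (Fin k → H) :=
    { toFun := fun v i => ∑ j, G i j * v j
      map_add' := fun a b => funext fun i => by simp [mul_add, Finset.sum_add_distrib]
      map_smul' := fun c a => funext fun i => by
        simp only [Pi.smul_apply, RingHom.id_apply]
        rw [Finset.smul_sum]
        exact Finset.sum_congr rfl fun j _ => mul_smul_comm c (G i j) (a j) }
  have hTb : ∀ v, ‖Tlin v‖ ≤ (k * (C * ε)) * ‖v‖ := by
    intro v
    refine (pi_norm_le_iff_of_nonneg (by positivity)).2 fun i => ?_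
    calc ‖∑ j, G i j * v j‖ ≤ ∑ j, ‖G i j * v j‖ := norm_sum_le _ _
      _ ≤ ∑ _j : Fin k, (C * ε) * ‖v‖ := by
          refine Finset.sum_le_sum fun j _ => ?_
          calc ‖G i j * v j‖ ≤ ‖G i j‖ * ‖v j‖ := norm_mul_le _ _
            _ ≤ (C * ε) * ‖v‖ :=
              mul_le_mul (hGsmall i j) (norm_le_pi_norm v j) (norm_nonneg _) (by positivity)
      _ = (k * (C * ε)) * ‖v‖ := by
          rw [Finset.sum_const, Finset.card_univ, Fintype.card_fin, nsmul_eq_mul]; ring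
  let T : (Fin k → H) →L[K] (Fin k → H) := Tlin.mkContinuous _ hTb
  have hT : ‖T‖ < 1 := by
    refine (Tlin.mkContinuous_norm_le (by positivity) hTb).trans_lt ?_
    have h1 : (k : ℝ) * (C * ε) = (k * C) * ε := by ring
    have h2 : (0:ℝ) < k * C + 1 := by positivity
    rw [h1, hε, mul_one_div, div_lt_one h2]
    linarith
  let u : ((Fin k → H) →L[K] (Fin k → H))ˣ := Units.oneSub T hT
  let V : (Fin k → H) →L[K] (Fin k → H) := ↑u⁻¹
  have huval : (↑u : (Fin k → H) →L[K] (Fin k → H)) = 1 - T := rfl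
  -- right multiplication operators
  let Rh : H → ((Fin k → H) →L[K] (Fin k → H)) := fun h =>
    LinearMap.mkContinuous
      { toFun := fun v i => v i * h
        map_add' := fun a b => funext fun i => add_mul _ _ _
        map_smul' := fun c a => funext fun i => smul_mul_assoc c (a i) h }
      ‖h‖ (fun v => by
        refine (pi_norm_le_iff_of_nonneg (by positivity)).2 fun i => ?_
        calc ‖v i * h‖ ≤ ‖v i‖ * ‖h‖ := norm_mul_le _ _
          _ ≤ ‖h‖ * ‖v‖ := by
              rw [mul_comm]
              exact mul_le_mul_of_nonneg_left (norm_le_pi_norm v i) (norm_nonneg _))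
  have hRh_apply : ∀ (h : H) (v : Fin k → H) (i : Fin k), (Rh h) v i = v i * h := fun _ _ _ => rfl
  have hTR : ∀ h : H, T * Rh h = Rh h * T := by
    intro h
    refine ContinuousLinearMap.ext fun v => funext fun i => ?_
    show (∑ j, G i j * (v j * h)) = (∑ j, G i j * v j) * h
    rw [Finset.sum_mul]
    exact Finset.sum_congr rfl fun j _ => (mul_assoc _ _ _).symm
  have hcomm : ∀ h : H, V * Rh h = Rh h * V := by
    intro h
    have h1 : (↑u : (Fin k → H) →L[K] (Fin k → H)) * V = 1 := u.mul_inv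
    have h2 : V * (↑u : (Fin k → H) →L[K] (Fin k → H)) = 1 := u.inv_mul
    have h3 : Rh h * (↑u : (Fin k → H) →L[K] (Fin k → H)) = ↑u * Rh h := by
      rw [huval, mul_sub, sub_mul, mul_one, one_mul, hTR h]
    calc V * Rh h = V * Rh h * (↑u * V) := by rw [h1, mul_one]
      _ = V * (Rh h * ↑u) * V := by simp only [mul_assoc]
      _ = V * (↑u * Rh h) * V := by rw [h3]
      _ = (V * ↑u) * (Rh h * V) := by simp only [mul_assoc]
      _ = Rh h * V := by rw [h2, one_mul]
  have hVR : ∀ (c : H) (x : Fin k → H), V ((Rh c) x) = (Rh c) (V x) := by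
    intro c x
    have := DFunLike.congr_fun (hcomm c) x
    simpa only [ContinuousLinearMap.mul_apply] using this
  let e : Fin k → (Fin k → H) := fun j => Pi.single j 1
  have hsingle : ∀ (c : H) (j : Fin k), (Rh c) (e j) = Pi.single j c := by
    intro c j
    funext i
    rw [hRh_apply]
    simp [e, Pi.single_apply, ite_mul]
  have hdecomp : ∀ v : Fin k → H, V v = ∑ j, (Rh (v j)) (V (e j)) := by
    intro v
    conv_lhs => rw [← Finset.univ_sum_single v]
    rw [map_sum]
    exact Finset.sum_congr rfl fun j _ => by rw [← hsingle, hVR]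
  let Vm : Fin k → Fin k → H := fun i j => V (e j) i
  have hmat : ∀ i l, ∑ j, Vm i j * (e l j - G j l) = e l i := by
    intro i l
    have h5 : V ((1 - T) (e l)) = e l := by
      have := DFunLike.congr_fun u.inv_mul (e l)
      simpa only [ContinuousLinearMap.mul_apply, ContinuousLinearMap.one_apply, huval] using this
    have hw : ∀ j, ((1 - T) (e l)) j = e l j - G j l := by
      intro j
      have hTel : (T (e l)) j = G j l := by
        show (∑ j', G j j' * e l j') = G j l
        simp [e, Pi.single_apply, mul_ite]
      simp [ContinuousLinearMap.sub_apply, ContinuousLinearMap.one_apply, hTel]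
    have h6 := congrFun (hdecomp ((1 - T) (e l))) i
    rw [h5] at h6
    rw [h6, Finset.sum_apply]
    exact Finset.sum_congr rfl fun j _ => by rw [hRh_apply, hw j]
  have hmem : ∀ i, f i ∈ Submodule.span H (Set.range f') := by
    intro i
    have hf'j : ∀ j, f' j = f j - ∑ l, G j l • f l := by
      intro j; rw [hG1 j, sub_sub_cancel]
    have hfi : f i = ∑ j, Vm i j • f' j := by
      symm
      calc ∑ j, Vm i j • f' j
          = ∑ j, (Vm i j • f j - ∑ l, (Vm i j * G j l) • f l) := by
            refine Finset.sum_congr rfl fun j _ => ?_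
            rw [hf'j j, smul_sub, Finset.smul_sum]
            congr 1
            exact Finset.sum_congr rfl fun l _ => (mul_smul _ _ _).symm
        _ = (∑ j, Vm i j • f j) - ∑ j, ∑ l, (Vm i j * G j l) • f l :=
            Finset.sum_sub_distrib _ _
        _ = (∑ l, Vm i l • f l) - ∑ l, (∑ j, Vm i j * G j l) • f l := by
            rw [Finset.sum_comm]
            congr 1
            exact Finset.sum_congr rfl fun l _ => (Finset.sum_smul).symm
        _ = ∑ l, (Vm i l - ∑ j, Vm i j * G j l) • f l := by
            rw [← Finset.sum_sub_distrib]
            exact Finset.sum_congr rfl fun l _ => (sub_smul _ _ _).symm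
        _ = ∑ l, (e l i) • f l := by
            refine Finset.sum_congr rfl fun l _ => ?_
            have hdist : ∑ j, Vm i j * (e l j - G j l)
                = (∑ j, Vm i j * e l j) - ∑ j, Vm i j * G j l := by
              rw [← Finset.sum_sub_distrib]
              exact Finset.sum_congr rfl fun j _ => mul_sub _ _ _
            have h7 : ∑ j, Vm i j * e l j = Vm i l := by
              simp [e, Pi.single_apply, mul_ite]
            congr 1
            rw [← hmat i l, hdist, h7]
        _ = f i := by
            simp [e, Pi.single_apply, ite_smul]
    rw [hfi]
    exact Submodule.sum_mem _ fun j _ =>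
      Submodule.smul_mem _ _ (Submodule.subset_span ⟨j, rfl⟩)
  rw [eq_top_iff, ← hgen]
  exact Submodule.span_le.2 (Set.range_subset_iff.2 hmem)
end

section
/- Fix 1 ≤ α ≤ n and a tuple s = (s_1,…,s_n) of positive reals with s_α ≤ 1, and let s' be the tuple with s'_β = s_β for β ≠ α and s'_α = p·s_α. The ℚ_p-algebra endomorphism of ℚ_p[T_1,…,T_n] determined by T_α ↦ (1+T_α)^p − 1 and T_β ↦ T_β for β ≠ α satisfies ‖φ_α(f)‖_s = ‖f‖_{s'} for all polynomials f, and hence extends uniquely to an isometric, in particular injective, continuous ℚ_p-algebra homomorphism φ_α : Π_{[s',∞]} → Π_{[s,∞]} between the completions of the polynomial ring with respect to the Gauss norms ‖·‖_{s'} and ‖·‖_s. -/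
open scoped BigOperators

section helpers
set_option linter.unusedSectionVars false
variable {p : ℕ} [hp : Fact p.Prime] {n : ℕ}

/-- Abbreviation for the weight of a monomial exponent. -/
noncomputable def gw (p : ℕ) {n : ℕ} (t : Fin n → ℝ) (m : Fin n →₀ ℕ) : ℝ :=
  gaussWeight p t fun β => (m β : ℤ)

lemma p_pos_real : (0:ℝ) < p := by exact_mod_cast hp.out.pos

lemma p_one_lt : (1:ℝ) < p := by exact_mod_cast hp.out.one_lt

lemma gw_pos (t : Fin n → ℝ) (m : Fin n →₀ ℕ) : 0 < gw p t m :=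
  Real.rpow_pos_of_pos p_pos_real _

lemma gw_def (t : Fin n → ℝ) (m : Fin n →₀ ℕ) :
    gw p t m = (p : ℝ) ^ (-(∑ β, t β * (m β : ℝ)) / ((p : ℝ) - 1)) := by
  unfold gw gaussWeight; norm_num

lemma gwNF (t : Fin n → ℝ) (α : Fin n) (m : Fin n →₀ ℕ) (j : ℕ) :
    gw p t (m.erase α + Finsupp.single α j) =
      (p : ℝ) ^ (-((∑ β ∈ Finset.univ.erase α, t β * (m β : ℝ)) + t α * (j : ℝ))
        / ((p : ℝ) - 1)) := by
  rw [gw_def]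
  congr 1
  have h : (fun β => t β * (((m.erase α + Finsupp.single α j) β : ℕ) : ℝ)) =
      Function.update (fun β => t β * (m β : ℝ)) α (t α * (j : ℝ)) := by
    funext β
    by_cases hβ : β = α
    · subst hβ
      simp [Finsupp.add_apply, Finsupp.erase_same, Finsupp.single_eq_same]
    · simp [Finsupp.add_apply, Finsupp.erase_ne hβ, Finsupp.single_eq_of_ne' (Ne.symm hβ),
        Function.update_of_ne hβ]
  rw [h, Finset.sum_update_of_mem (Finset.mem_univ α), ← Finset.erase_eq]
  ring

lemma gw_s_apply (t : Fin n → ℝ) (α : Fin n) (m : Fin n →₀ ℕ) :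
    gw p t m =
      (p : ℝ) ^ (-((∑ β ∈ Finset.univ.erase α, t β * (m β : ℝ)) + t α * (m α : ℝ))
        / ((p : ℝ) - 1)) := by
  conv_lhs => rw [← Finsupp.erase_add_single α m]
  rw [gwNF]

lemma gw_update (s : Fin n → ℝ) (α : Fin n) (m : Fin n →₀ ℕ) :
    gw p (Function.update s α ((p : ℝ) * s α)) m =
      (p : ℝ) ^ (-((∑ β ∈ Finset.univ.erase α, s β * (m β : ℝ))
          + s α * (p : ℝ) * (m α : ℝ)) / ((p : ℝ) - 1)) := by
  rw [gw_s_apply _ α]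
  have h1 : ∑ β ∈ Finset.univ.erase α, Function.update s α ((p:ℝ) * s α) β * (m β : ℝ)
      = ∑ β ∈ Finset.univ.erase α, s β * (m β : ℝ) :=
    Finset.sum_congr rfl fun β hβ => by rw [Function.update_of_ne (Finset.ne_of_mem_erase hβ)]
  rw [h1, Function.update_self]
  congr 1
  ring




/-- The one-variable polynomial `(1+X)^p - 1`. -/
noncomputable def Gp (p : ℕ) [Fact p.Prime] : Polynomial ℚ_[p] :=
  (1 + Polynomial.X) ^ p - 1

lemma Gp_coeff_le {σ : ℝ} (hσ0 : 0 < σ) (hσ1 : σ ≤ 1) (j : ℕ) :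
    ‖(Gp p).coeff j‖ ≤ (p : ℝ) ^ ((σ * (j:ℝ) - σ * (p:ℝ)) / ((p:ℝ) - 1)) := by
  have hcoeff : (Gp p).coeff j
      = ((p.choose j : ℚ_[p])) - (if j = 0 then 1 else 0) := by
    rw [Gp, add_comm (1 : Polynomial ℚ_[p]) Polynomial.X, Polynomial.coeff_sub,
      Polynomial.coeff_X_add_one_pow, Polynomial.coeff_one]
  rcases eq_or_ne j 0 with hj0 | hj0
  · subst hj0
    have h0 : (Gp p).coeff 0 = 0 := by simp [hcoeff]
    rw [h0, norm_zero]
    positivity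
  rw [hcoeff, if_neg hj0, sub_zero]
  rcases lt_trichotomy j p with hjp | hjp | hjp
  · -- 0 < j < p : coefficient divisible by p
    have hdvd : (p:ℤ) ^ 1 ∣ (p.choose j : ℤ) := by
      simpa using Int.natCast_dvd_natCast.2 (hp.out.dvd_choose_self hj0 hjp)
    have hle : ‖((p.choose j : ℤ) : ℚ_[p])‖ ≤ (p:ℝ) ^ (-(1:ℕ) : ℤ) :=
      (Padic.norm_int_le_pow_iff_dvd _ _).2 hdvd
    have hle' : ‖(p.choose j : ℚ_[p])‖ ≤ (p:ℝ) ^ (-1 : ℝ) := by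
      rw [← Real.rpow_intCast (p:ℝ) (-(1:ℕ) : ℤ)] at hle
      simpa using hle
    refine hle'.trans ?_
    rw [Real.rpow_le_rpow_left_iff p_one_lt]
    rw [le_div_iff₀ (by linarith [p_one_lt (p := p)] : (0:ℝ) < (p:ℝ) - 1)]
    have hj1 : (j:ℝ) + 1 ≤ (p:ℝ) := by exact_mod_cast Nat.succ_le_of_lt hjp
    have hjge : (1:ℝ) ≤ (j:ℝ) := by exact_mod_cast Nat.one_le_iff_ne_zero.2 hj0
    nlinarith [mul_nonneg (sub_nonneg.2 hσ1) (by linarith : (0:ℝ) ≤ (p:ℝ) - (j:ℝ))]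
  · rw [hjp, Nat.choose_self]
    simp only [Nat.cast_one, norm_one]
    have h0 : (σ * (p:ℝ) - σ * (p:ℝ)) / ((p:ℝ) - 1) = 0 := by ring
    rw [h0, Real.rpow_zero]
  · rw [Nat.choose_eq_zero_of_lt hjp]
    simp only [Nat.cast_zero, norm_zero]
    positivity

lemma Gp_pow_coeff_le {σ : ℝ} (hσ0 : 0 < σ) (hσ1 : σ ≤ 1) (k j : ℕ) :
    ‖((Gp p ^ k)).coeff j‖ ≤ (p : ℝ) ^ ((σ * (j:ℝ) - σ * (p:ℝ) * (k:ℝ)) / ((p:ℝ) - 1)) := by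
  induction k generalizing j with
  | zero =>
    rcases eq_or_ne j 0 with rfl | hj
    · simp only [pow_zero, Polynomial.coeff_one, if_pos rfl, norm_one]
      have h0 : (σ * ((0:ℕ):ℝ) - σ * (p:ℝ) * ((0:ℕ):ℝ)) / ((p:ℝ) - 1) = 0 := by
        push_cast; ring
      rw [h0, Real.rpow_zero]
      simp
    · simp only [pow_zero, Polynomial.coeff_one, if_neg hj, norm_zero]
      positivity
  | succ k ih =>
    rw [pow_succ, Polynomial.coeff_mul]
    refine IsUltrametricDist.norm_sum_le_of_forall_le_of_nonneg (by positivity) ?_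
    rintro ⟨i1, i2⟩ hmem
    have hsum : i1 + i2 = j := Finset.HasAntidiagonal.mem_antidiagonal.1 hmem
    have h1 := ih i1
    have h2 := Gp_coeff_le hσ0 hσ1 (p := p) i2
    calc ‖(Gp p ^ k).coeff i1 * (Gp p).coeff i2‖
        = ‖(Gp p ^ k).coeff i1‖ * ‖(Gp p).coeff i2‖ := norm_mul _ _
      _ ≤ (p : ℝ) ^ ((σ * (i1:ℝ) - σ * (p:ℝ) * (k:ℝ)) / ((p:ℝ) - 1)) *
          (p : ℝ) ^ ((σ * (i2:ℝ) - σ * (p:ℝ)) / ((p:ℝ) - 1)) :=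
        mul_le_mul h1 h2 (norm_nonneg _) (by positivity)
      _ = (p : ℝ) ^ ((σ * ((i1:ℝ) + (i2:ℝ)) - σ * (p:ℝ) * ((k:ℝ) + 1)) / ((p:ℝ) - 1)) := by
        rw [← Real.rpow_add p_pos_real]
        congr 1
        ring
      _ = (p : ℝ) ^ ((σ * (j:ℝ) - σ * (p:ℝ) * ((k+1:ℕ):ℝ)) / ((p:ℝ) - 1)) := by
        congr 1
        push_cast [← hsum]
        ring

lemma Gp_monic : (Gp p).Monic := by
  have hX1 : (Polynomial.X + 1 : Polynomial ℚ_[p]).Monic := by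
    simpa using Polynomial.monic_X_add_C (1 : ℚ_[p])
  have hpow : ((Polynomial.X + 1 : Polynomial ℚ_[p]) ^ p).Monic := hX1.pow p
  have hGp : Gp p = (Polynomial.X + 1) ^ p + (-1) := by
    rw [Gp, add_comm (1 : Polynomial ℚ_[p]) Polynomial.X, sub_eq_add_neg]
  rw [hGp]
  refine hpow.add_of_left ?_
  have hnd : ((Polynomial.X + 1 : Polynomial ℚ_[p]) ^ p).natDegree = p := by
    rw [hX1.natDegree_pow]
    have h1 : (Polynomial.X + 1 : Polynomial ℚ_[p]).natDegree = 1 := by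
      simpa using Polynomial.natDegree_X_add_C (1 : ℚ_[p])
    rw [h1, mul_one]
  rw [Polynomial.degree_eq_natDegree hpow.ne_zero, hnd, Polynomial.degree_neg,
    Polynomial.degree_one]
  exact_mod_cast hp.out.pos

lemma Gp_natDegree : (Gp p).natDegree = p := by
  have hX1 : (Polynomial.X + 1 : Polynomial ℚ_[p]).Monic := by
    simpa using Polynomial.monic_X_add_C (1 : ℚ_[p])
  have hpow : ((Polynomial.X + 1 : Polynomial ℚ_[p]) ^ p).Monic := hX1.pow p
  have hnd : ((Polynomial.X + 1 : Polynomial ℚ_[p]) ^ p).natDegree = p := by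
    rw [hX1.natDegree_pow]
    have h1 : (Polynomial.X + 1 : Polynomial ℚ_[p]).natDegree = 1 := by
      simpa using Polynomial.natDegree_X_add_C (1 : ℚ_[p])
    rw [h1, mul_one]
  have hGp : Gp p = (Polynomial.X + 1) ^ p + (-1) := by
    rw [Gp, add_comm (1 : Polynomial ℚ_[p]) Polynomial.X, sub_eq_add_neg]
  have hlt : (-1 : Polynomial ℚ_[p]).degree < ((Polynomial.X + 1 : Polynomial ℚ_[p]) ^ p).degree := by
    rw [Polynomial.degree_eq_natDegree hpow.ne_zero, hnd, Polynomial.degree_neg,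
      Polynomial.degree_one]
    exact_mod_cast hp.out.pos
  have hdeg : (Gp p).degree = ((Polynomial.X + 1 : Polynomial ℚ_[p]) ^ p).degree := by
    rw [hGp]
    exact Polynomial.degree_add_eq_left_of_degree_lt hlt
  have : (Gp p).degree = (p : ℕ) := by
    rw [hdeg, Polynomial.degree_eq_natDegree hpow.ne_zero, hnd]
  exact Polynomial.natDegree_eq_of_degree_eq_some this

lemma Gp_pow_natDegree (k : ℕ) : (Gp p ^ k).natDegree = k * p := by
  rw [Gp_monic.natDegree_pow, Gp_natDegree]

lemma Gp_pow_coeff_top (k : ℕ) : (Gp p ^ k).coeff (k * p) = 1 := by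
  have h := (Gp_monic (p := p)).pow k
  rw [← Gp_pow_natDegree k]
  exact h.coeff_natDegree

lemma Gp_pow_coeff_zero_of_lt {k j : ℕ} (h : k * p < j) : (Gp p ^ k).coeff j = 0 :=
  Polynomial.coeff_eq_zero_of_natDegree_lt (by rw [Gp_pow_natDegree]; exact h)

end helpers

section coeff
set_option linter.unusedSectionVars false
variable {p : ℕ} [hp : Fact p.Prime] {n : ℕ} (α : Fin n)

open MvPolynomial Finsupp

lemma frob_single_add_cond (m M : Fin n →₀ ℕ) (e : ℕ) :
    Finsupp.single α e + m.erase α = M ↔ (e = M α ∧ M.erase α = m.erase α) := by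
  constructor
  · rintro rfl
    refine ⟨?_, ?_⟩
    · simp [Finsupp.add_apply, Finsupp.single_eq_same, Finsupp.erase_same]
    · rw [Finsupp.erase_add, Finsupp.erase_single, zero_add, Finsupp.erase_idem]
  · rintro ⟨rfl, h2⟩
    conv_rhs => rw [← Finsupp.single_add_erase α M]
    rw [h2]

lemma coeff_frob_monomial (m M : Fin n →₀ ℕ) (a : ℚ_[p]) :
    MvPolynomial.coeff M (frobSubst p α (MvPolynomial.monomial m a)) =
      if M.erase α = m.erase α then a * ((Gp p ^ (m α)).coeff (M α)) else 0 := by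
  classical
  set g : Fin n → MvPolynomial (Fin n) ℚ_[p] :=
    fun β => if β = α then (1 + MvPolynomial.X α) ^ p - 1 else MvPolynomial.X β with hg
  have step1 : frobSubst p α (MvPolynomial.monomial m a) =
      MvPolynomial.C a * (((1 + MvPolynomial.X α) ^ p - 1) ^ (m α)
        * MvPolynomial.monomial (m.erase α) 1) := by
    rw [frobSubst, MvPolynomial.aeval_monomial]
    congr 1
    conv_lhs => rw [← Finsupp.single_add_erase α m]
    rw [Finsupp.prod_add_index (fun β _ => pow_zero _) (fun β _ b1 b2 => pow_add _ b1 b2)]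
    congr 1
    · rw [Finsupp.prod_single_index (h := fun β e => g β ^ e) (pow_zero _)]
      simp [hg]
    · rw [show (m.erase α).prod (fun β e => g β ^ e)
          = (m.erase α).prod (fun β e => MvPolynomial.X β ^ e) from
        Finsupp.prod_congr (fun β hβ => by
          have hne : β ≠ α := by
            have := hβ
            rw [Finsupp.support_erase, Finset.mem_erase] at this
            exact this.1
          simp [hg, hne])]
      rw [MvPolynomial.monomial_eq, map_one, one_mul]
  have step2 : ((1 + MvPolynomial.X α : MvPolynomial (Fin n) ℚ_[p]) ^ p - 1) ^ (m α)
      = Polynomial.aeval (MvPolynomial.X α) (Gp p ^ (m α)) := by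
    rw [map_pow]
    congr 1
    rw [Gp, map_sub, map_pow, map_add, map_one, Polynomial.aeval_X]
  have step3 : (Polynomial.aeval (MvPolynomial.X α) (Gp p ^ (m α))
        : MvPolynomial (Fin n) ℚ_[p])
      = ∑ e ∈ (Gp p ^ (m α)).support,
          MvPolynomial.monomial (Finsupp.single α e) ((Gp p ^ (m α)).coeff e) := by
    rw [Polynomial.aeval_def, Polynomial.eval₂_eq_sum, Polynomial.sum_def]
    refine Finset.sum_congr rfl fun e _ => ?_
    rw [MvPolynomial.algebraMap_eq, MvPolynomial.X_pow_eq_monomial,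
      MvPolynomial.C_mul_monomial, mul_one]
  rw [step1, step2, step3, Finset.sum_mul, Finset.mul_sum, MvPolynomial.coeff_sum]
  have hterm : ∀ e, MvPolynomial.coeff M (MvPolynomial.C a *
        (MvPolynomial.monomial (Finsupp.single α e) ((Gp p ^ (m α)).coeff e)
          * MvPolynomial.monomial (m.erase α) 1))
      = if Finsupp.single α e + m.erase α = M then a * (Gp p ^ (m α)).coeff e else 0 := by
    intro e
    rw [MvPolynomial.monomial_mul, mul_one, MvPolynomial.coeff_C_mul,
      MvPolynomial.coeff_monomial]
    split <;> simp
  simp only [hterm]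
  by_cases hM : M.erase α = m.erase α
  · have hcond : ∀ e, (Finsupp.single α e + m.erase α = M) ↔ e = M α := by
      intro e
      rw [frob_single_add_cond]
      exact ⟨fun h => h.1, fun h => ⟨h, hM⟩⟩
    rw [if_pos hM]
    calc (∑ e ∈ (Gp p ^ (m α)).support,
            if Finsupp.single α e + m.erase α = M then a * (Gp p ^ (m α)).coeff e else 0)
        = ∑ e ∈ (Gp p ^ (m α)).support,
            if e = M α then a * (Gp p ^ (m α)).coeff e else 0 :=
          Finset.sum_congr rfl fun e _ => if_congr (hcond e) rfl rfl
      _ = if M α ∈ (Gp p ^ (m α)).support then a * (Gp p ^ (m α)).coeff (M α) else 0 :=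
          Finset.sum_ite_eq' _ _ _
      _ = a * (Gp p ^ (m α)).coeff (M α) := by
          split
          · rfl
          · rename_i h
            rw [Polynomial.notMem_support_iff.1 h, mul_zero]
  · rw [if_neg hM]
    refine Finset.sum_eq_zero fun e _ => ?_
    rw [if_neg]
    intro h
    exact hM ((frob_single_add_cond α m M e).1 h).2

lemma coeff_frob (f : MvPolynomial (Fin n) ℚ_[p]) (M : Fin n →₀ ℕ) :
    MvPolynomial.coeff M (frobSubst p α f) =
      ∑ m ∈ f.support, if M.erase α = m.erase α then
        MvPolynomial.coeff m f * ((Gp p ^ (m α)).coeff (M α)) else 0 := by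
  conv_lhs => rw [← MvPolynomial.support_sum_monomial_coeff f]
  rw [map_sum, MvPolynomial.coeff_sum]
  exact Finset.sum_congr rfl fun m _ => coeff_frob_monomial α m M _

end coeff

section norms
set_option linter.unusedSectionVars false
variable {p : ℕ} [hp : Fact p.Prime] {n : ℕ}

lemma polyGaussNorm_eq (t : Fin n → ℝ) (f : MvPolynomial (Fin n) ℚ_[p]) :
    polyGaussNorm p t f = ⨆ m : Fin n →₀ ℕ, ‖MvPolynomial.coeff m f‖ * gw p t m := rfl

lemma gauss_bdd (t : Fin n → ℝ) (f : MvPolynomial (Fin n) ℚ_[p]) :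
    BddAbove (Set.range fun m : Fin n →₀ ℕ => ‖MvPolynomial.coeff m f‖ * gw p t m) := by
  refine Set.Finite.bddAbove ?_
  have hsub : (Set.range fun m : Fin n →₀ ℕ => ‖MvPolynomial.coeff m f‖ * gw p t m) ⊆
      insert 0 ((fun m : Fin n →₀ ℕ => ‖MvPolynomial.coeff m f‖ * gw p t m) ''
        (f.support : Set (Fin n →₀ ℕ))) := by
    rintro _ ⟨m, rfl⟩
    by_cases hm : m ∈ f.support
    · exact Set.mem_insert_of_mem _ ⟨m, hm, rfl⟩
    · left
      show ‖MvPolynomial.coeff m f‖ * gw p t m = 0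
      rw [MvPolynomial.notMem_support_iff.1 hm, norm_zero, zero_mul]
  exact Set.Finite.subset (Set.Finite.insert 0 ((f.support.finite_toSet).image _)) hsub

lemma le_polyGaussNorm (t : Fin n → ℝ) (f : MvPolynomial (Fin n) ℚ_[p]) (m : Fin n →₀ ℕ) :
    ‖MvPolynomial.coeff m f‖ * gw p t m ≤ polyGaussNorm p t f :=
  le_ciSup (gauss_bdd t f) m

lemma polyGaussNorm_nonneg (t : Fin n → ℝ) (f : MvPolynomial (Fin n) ℚ_[p]) :
    0 ≤ polyGaussNorm p t f :=
  le_trans (mul_nonneg (norm_nonneg _) (gw_pos t 0).le) (le_polyGaussNorm t f 0)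

lemma polyGaussNorm_le (t : Fin n → ℝ) (f : MvPolynomial (Fin n) ℚ_[p]) {C : ℝ}
    (hC : 0 ≤ C) (h : ∀ m, ‖MvPolynomial.coeff m f‖ * gw p t m ≤ C) :
    polyGaussNorm p t f ≤ C :=
  Real.iSup_le h hC

lemma polyGaussNorm_zero (t : Fin n → ℝ) : polyGaussNorm p (n := n) t 0 = 0 := by
  rw [polyGaussNorm_eq]
  simp only [MvPolynomial.coeff_zero, norm_zero, zero_mul]
  exact ciSup_const

end norms

section main
set_option linter.unusedSectionVars false
variable {p : ℕ} [hp : Fact p.Prime] {n : ℕ} {α : Fin n} {s : Fin n → ℝ}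

/-- Erase-equality transfers off-`α` sums. -/
lemma erase_sum_eq {m M : Fin n →₀ ℕ} (h : M.erase α = m.erase α) (t : Fin n → ℝ) :
    ∑ β ∈ Finset.univ.erase α, t β * (m β : ℝ) =
      ∑ β ∈ Finset.univ.erase α, t β * (M β : ℝ) := by
  refine Finset.sum_congr rfl fun β hβ => ?_
  have hne : β ≠ α := Finset.ne_of_mem_erase hβ
  have : m β = M β := by
    have h1 := congrArg (fun f : Fin n →₀ ℕ => f β) h
    simpa [Finsupp.erase_ne hne] using h1.symm
  rw [this]

lemma norm_frob_le (hs : ∀ β, 0 < s β) (hsα : s α ≤ 1) (f : MvPolynomial (Fin n) ℚ_[p]) :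
    polyGaussNorm p s (frobSubst p α f) ≤
      polyGaussNorm p (Function.update s α ((p : ℝ) * s α)) f := by
  set s' := Function.update s α ((p : ℝ) * s α) with hs'
  set C := polyGaussNorm p s' f with hC
  have hC0 : 0 ≤ C := polyGaussNorm_nonneg _ _
  refine polyGaussNorm_le _ _ hC0 fun M => ?_
  rw [coeff_frob]
  rw [← le_div_iff₀ (gw_pos s M)]
  refine IsUltrametricDist.norm_sum_le_of_forall_le_of_nonneg
    (div_nonneg hC0 (gw_pos s M).le) fun m hm => ?_
  split
  · rename_i hcond
    rw [le_div_iff₀ (gw_pos s M), norm_mul]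
    have h1 : ‖(Gp p ^ (m α)).coeff (M α)‖ ≤
        (p : ℝ) ^ ((s α * (M α : ℝ) - s α * (p:ℝ) * (m α : ℝ)) / ((p:ℝ) - 1)) :=
      Gp_pow_coeff_le (hs α) hsα (m α) (M α)
    have h2 : (p : ℝ) ^ ((s α * (M α : ℝ) - s α * (p:ℝ) * (m α : ℝ)) / ((p:ℝ) - 1))
        * gw p s M = gw p s' m := by
      rw [gw_s_apply s α M, gw_update s α m, ← Real.rpow_add p_pos_real]
      rw [erase_sum_eq hcond s]
      congr 1
      ring
    calc ‖MvPolynomial.coeff m f‖ * ‖(Gp p ^ (m α)).coeff (M α)‖ * gw p s M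
        ≤ ‖MvPolynomial.coeff m f‖ *
            ((p : ℝ) ^ ((s α * (M α : ℝ) - s α * (p:ℝ) * (m α : ℝ)) / ((p:ℝ) - 1))) *
            gw p s M := by
          have := mul_le_mul_of_nonneg_left h1 (norm_nonneg (MvPolynomial.coeff m f))
          exact mul_le_mul_of_nonneg_right this (gw_pos s M).le
      _ = ‖MvPolynomial.coeff m f‖ * gw p s' m := by rw [mul_assoc, h2]
      _ ≤ C := le_polyGaussNorm s' f m
  · rw [norm_zero]
    exact div_nonneg hC0 (gw_pos s M).le

lemma norm_frob_ge (hs : ∀ β, 0 < s β) (hsα : s α ≤ 1) (f : MvPolynomial (Fin n) ℚ_[p]) :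
    polyGaussNorm p (Function.update s α ((p : ℝ) * s α)) f ≤
      polyGaussNorm p s (frobSubst p α f) := by
  classical
  set s' := Function.update s α ((p : ℝ) * s α) with hs'
  rcases eq_or_ne f 0 with rfl | hf
  · rw [map_zero, polyGaussNorm_zero, polyGaussNorm_zero]
  have hsupp : f.support.Nonempty := MvPolynomial.support_nonempty.2 hf
  obtain ⟨m₁, hm₁, hm₁max⟩ := Finset.exists_max_image f.support
    (fun m => ‖MvPolynomial.coeff m f‖ * gw p s' m) hsupp
  set V := ‖MvPolynomial.coeff m₁ f‖ * gw p s' m₁ with hVdef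
  have hV0 : 0 < V :=
    mul_pos (norm_pos_iff.2 (MvPolynomial.mem_support_iff.1 hm₁)) (gw_pos _ _)
  have hNle : polyGaussNorm p s' f ≤ V := by
    refine polyGaussNorm_le _ _ hV0.le fun m => ?_
    by_cases hm : m ∈ f.support
    · exact hm₁max m hm
    · rw [MvPolynomial.notMem_support_iff.1 hm, norm_zero, zero_mul]
      exact hV0.le
  set S := f.support.filter (fun m => ‖MvPolynomial.coeff m f‖ * gw p s' m = V) with hS
  have hSne : S.Nonempty := ⟨m₁, Finset.mem_filter.2 ⟨hm₁, rfl⟩⟩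
  obtain ⟨m₀, hm₀S, hm₀max⟩ := Finset.exists_max_image S (fun m => m α) hSne
  have hm₀supp : m₀ ∈ f.support := (Finset.mem_filter.1 hm₀S).1
  have hm₀V : ‖MvPolynomial.coeff m₀ f‖ * gw p s' m₀ = V := (Finset.mem_filter.1 hm₀S).2
  have hc₀ : (0:ℝ) < ‖MvPolynomial.coeff m₀ f‖ :=
    norm_pos_iff.2 (MvPolynomial.mem_support_iff.1 hm₀supp)
  set M₀ := m₀.erase α + Finsupp.single α (p * m₀ α) with hM₀
  have hM₀α : M₀ α = p * m₀ α := by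
    simp [hM₀, Finsupp.add_apply, Finsupp.erase_same, Finsupp.single_eq_same]
  have hM₀e : M₀.erase α = m₀.erase α := by
    rw [hM₀, Finsupp.erase_add, Finsupp.erase_single, add_zero, Finsupp.erase_idem]
  have hgwM₀ : gw p s M₀ = gw p s' m₀ := by
    rw [hM₀, gwNF s α m₀ (p * m₀ α), gw_update s α m₀]
    congr 1
    push_cast
    ring
  have hcoeff : MvPolynomial.coeff M₀ (frobSubst p α f) = MvPolynomial.coeff m₀ f +
      ∑ m ∈ f.support.erase m₀, (if M₀.erase α = m.erase α then
        MvPolynomial.coeff m f * ((Gp p ^ (m α)).coeff (M₀ α)) else 0) := by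
    rw [coeff_frob, ← Finset.add_sum_erase _ _ hm₀supp]
    congr 1
    rw [if_pos hM₀e, hM₀α, mul_comm p (m₀ α), Gp_pow_coeff_top, mul_one]
  have hbound : ∀ m ∈ f.support.erase m₀,
      ‖(if M₀.erase α = m.erase α then
        MvPolynomial.coeff m f * ((Gp p ^ (m α)).coeff (M₀ α)) else 0)‖ <
        ‖MvPolynomial.coeff m₀ f‖ := by
    intro m hm'
    obtain ⟨hmne, hm⟩ := Finset.mem_erase.1 hm'
    split
    · rename_i hcond
      have hee : m.erase α = m₀.erase α := hcond ▸ hM₀e ▸ rfl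
      have hα : m α ≠ m₀ α := by
        intro h
        apply hmne
        ext β
        by_cases hβ : β = α
        · rw [hβ, h]
        · have h1 := congrArg (fun g : Fin n →₀ ℕ => g β) hee
          simpa [Finsupp.erase_ne hβ] using h1
      rcases lt_or_gt_of_ne hα with hlt | hgt
      · have hz : (Gp p ^ (m α)).coeff (M₀ α) = 0 := by
          refine Gp_pow_coeff_zero_of_lt ?_
          rw [hM₀α, mul_comm p (m₀ α)]
          exact Nat.mul_lt_mul_of_pos_right hlt hp.out.pos
        rw [hz, mul_zero, norm_zero]
        exact hc₀
      · have hmnotS : m ∉ S := fun hmS => absurd (hm₀max m hmS) (not_le.2 hgt)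
        have hlt' : ‖MvPolynomial.coeff m f‖ * gw p s' m < V :=
          lt_of_le_of_ne (hm₁max m hm)
            (fun h => hmnotS (Finset.mem_filter.2 ⟨hm, h⟩))
        have h1 : ‖(Gp p ^ (m α)).coeff (M₀ α)‖ ≤
            (p:ℝ) ^ ((s α * (M₀ α : ℝ) - s α * (p:ℝ) * (m α : ℝ)) / ((p:ℝ) - 1)) :=
          Gp_pow_coeff_le (hs α) hsα (m α) (M₀ α)
        have h2 : (p:ℝ) ^ ((s α * (M₀ α : ℝ) - s α * (p:ℝ) * (m α : ℝ)) / ((p:ℝ) - 1))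
            * gw p s' m₀ = gw p s' m := by
          rw [gw_update s α m₀, gw_update s α m, ← Real.rpow_add p_pos_real]
          rw [erase_sum_eq (show (m₀ : Fin n →₀ ℕ).erase α = m.erase α from hee.symm) s]
          congr 1
          have hcast : ((M₀ α : ℕ) : ℝ) = (p:ℝ) * (m₀ α : ℝ) := by
            rw [hM₀α]; push_cast; ring
          rw [hcast]
          ring
        have key : (‖MvPolynomial.coeff m f‖ *
            (p:ℝ) ^ ((s α * (M₀ α : ℝ) - s α * (p:ℝ) * (m α : ℝ)) / ((p:ℝ) - 1)))
            * gw p s' m₀ < ‖MvPolynomial.coeff m₀ f‖ * gw p s' m₀ := by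
          rw [mul_assoc, h2, hm₀V]
          exact hlt'
        have hmain : ‖MvPolynomial.coeff m f‖ *
            (p:ℝ) ^ ((s α * (M₀ α : ℝ) - s α * (p:ℝ) * (m α : ℝ)) / ((p:ℝ) - 1))
            < ‖MvPolynomial.coeff m₀ f‖ :=
          lt_of_mul_lt_mul_right key (gw_pos _ _).le
        calc ‖MvPolynomial.coeff m f * (Gp p ^ (m α)).coeff (M₀ α)‖
            = ‖MvPolynomial.coeff m f‖ * ‖(Gp p ^ (m α)).coeff (M₀ α)‖ := norm_mul _ _
          _ ≤ ‖MvPolynomial.coeff m f‖ *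
              (p:ℝ) ^ ((s α * (M₀ α : ℝ) - s α * (p:ℝ) * (m α : ℝ)) / ((p:ℝ) - 1)) :=
            mul_le_mul_of_nonneg_left h1 (norm_nonneg _)
          _ < ‖MvPolynomial.coeff m₀ f‖ := hmain
    · rw [norm_zero]
      exact hc₀
  have hrest : ‖∑ m ∈ f.support.erase m₀, (if M₀.erase α = m.erase α then
      MvPolynomial.coeff m f * ((Gp p ^ (m α)).coeff (M₀ α)) else 0)‖ <
        ‖MvPolynomial.coeff m₀ f‖ := by
    rcases Finset.eq_empty_or_nonempty (f.support.erase m₀) with he | hne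
    · rw [he, Finset.sum_empty, norm_zero]
      exact hc₀
    · refine lt_of_le_of_lt (hne.norm_sum_le_sup'_norm _) ?_
      rw [Finset.sup'_lt_iff]
      exact hbound
  have hnorm₀ : ‖MvPolynomial.coeff M₀ (frobSubst p α f)‖ = ‖MvPolynomial.coeff m₀ f‖ := by
    rw [hcoeff, Padic.add_eq_max_of_ne hrest.ne']
    exact max_eq_left hrest.le
  calc polyGaussNorm p s' f ≤ V := hNle
    _ = ‖MvPolynomial.coeff M₀ (frobSubst p α f)‖ * gw p s M₀ := by
        rw [hnorm₀, hgwM₀, hm₀V]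
    _ ≤ polyGaussNorm p s (frobSubst p α f) := le_polyGaussNorm _ _ _

lemma norm_frob_eq (hs : ∀ β, 0 < s β) (hsα : s α ≤ 1) (f : MvPolynomial (Fin n) ℚ_[p]) :
    polyGaussNorm p s (frobSubst p α f) =
      polyGaussNorm p (Function.update s α ((p : ℝ) * s α)) f :=
  le_antisymm (norm_frob_le hs hsα f) (norm_frob_ge hs hsα f)

end main

/-- A completion `Π_{[t,∞]}` of the polynomial ring `ℚ_p[T₁,…,Tₙ]` w.r.t. a norm `N`. -/
structure PolyGaussCompletion (p : ℕ) [Fact p.Prime] (n : ℕ)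
    (N : MvPolynomial (Fin n) ℚ_[p] → ℝ) where
  carrier : Type
  [normedRing : NormedCommRing carrier]
  [normedAlgebra : NormedAlgebra ℚ_[p] carrier]
  [complete : CompleteSpace carrier]
  emb : MvPolynomial (Fin n) ℚ_[p] →ₐ[ℚ_[p]] carrier
  isometric : ∀ f, ‖emb f‖ = N f
  denseRange : DenseRange (fun f => emb f)

attribute [instance] PolyGaussCompletion.normedRing PolyGaussCompletion.normedAlgebra
  PolyGaussCompletion.complete

/-- The partial Frobenius substitution `T_α ↦ (1+T_α)^p − 1` satisfies
`‖φ_α(f)‖_s = ‖f‖_{s'}` (where `s'_α = p·s_α`, `s'_β = s_β` otherwise) on polynomials, and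
hence extends uniquely to an isometric, in particular injective, continuous `ℚ_p`-algebra
homomorphism `φ_α : Π_{[s',∞]} → Π_{[s,∞]}` between the completions. -/
theorem frobSubst_isometric_extension
    (p : ℕ) [Fact p.Prime] (n : ℕ) (α : Fin n) (s : Fin n → ℝ)
    (hs : ∀ β, 0 < s β) (hsα : s α ≤ 1)
    (D : PolyGaussCompletion p n (polyGaussNorm p s))
    (D' : PolyGaussCompletion p n (polyGaussNorm p (Function.update s α ((p : ℝ) * s α)))) :
    (∀ f : MvPolynomial (Fin n) ℚ_[p],
      polyGaussNorm p s (frobSubst p α f) =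
        polyGaussNorm p (Function.update s α ((p : ℝ) * s α)) f) ∧
    (∃! Φ : D'.carrier →ₐ[ℚ_[p]] D.carrier, Continuous Φ ∧
      ∀ f, Φ (D'.emb f) = D.emb (frobSubst p α f)) ∧
    (∀ Φ : D'.carrier →ₐ[ℚ_[p]] D.carrier, Continuous Φ →
      (∀ f, Φ (D'.emb f) = D.emb (frobSubst p α f)) →
      (∀ F, ‖Φ F‖ = ‖F‖) ∧ Function.Injective Φ) := by
  classical
  have hnorm : ∀ f : MvPolynomial (Fin n) ℚ_[p],
      polyGaussNorm p s (frobSubst p α f) =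
        polyGaussNorm p (Function.update s α ((p : ℝ) * s α)) f :=
    fun f => norm_frob_eq hs hsα f
  set e : MvPolynomial (Fin n) ℚ_[p] → D'.carrier := fun f => D'.emb f with he
  set g : MvPolynomial (Fin n) ℚ_[p] → D.carrier :=
    fun f => D.emb (frobSubst p α f) with hg
  have hge : ∀ f, ‖g f‖ = ‖e f‖ := fun f => by
    show ‖D.emb (frobSubst p α f)‖ = ‖D'.emb f‖
    rw [D.isometric, D'.isometric, hnorm]
  have hdense : DenseRange e := D'.denseRange
  -- Part 3: any continuous algebra homomorphism extending `g` is isometric and injective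
  have part3 : ∀ Φ : D'.carrier →ₐ[ℚ_[p]] D.carrier, Continuous Φ →
      (∀ f, Φ (D'.emb f) = D.emb (frobSubst p α f)) →
      (∀ F, ‖Φ F‖ = ‖F‖) ∧ Function.Injective Φ := by
    intro Φ hc hagree
    have hisome : ∀ F, ‖Φ F‖ = ‖F‖ := by
      have heq := Continuous.ext_on hdense (continuous_norm.comp hc) continuous_norm
        (fun x hx => by
          obtain ⟨f, rfl⟩ := hx
          show ‖Φ (e f)‖ = ‖e f‖
          rw [show Φ (e f) = g f from hagree f, hge])
      exact fun F => congrFun heq F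
    refine ⟨hisome, fun F F' h => ?_⟩
    have h0 : ‖Φ (F - F')‖ = 0 := by rw [map_sub, h, sub_self, norm_zero]
    rw [hisome] at h0
    exact sub_eq_zero.1 (norm_eq_zero.1 h0)
  -- Part 2: existence and uniqueness of the extension
  letI : PseudoMetricSpace (MvPolynomial (Fin n) ℚ_[p]) :=
    PseudoMetricSpace.induced e inferInstance
  letI : UniformSpace (MvPolynomial (Fin n) ℚ_[p]) := PseudoMetricSpace.toUniformSpace
  letI : TopologicalSpace (MvPolynomial (Fin n) ℚ_[p]) := UniformSpace.toTopologicalSpace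
  have he_isom : Isometry e := Isometry.of_dist_eq fun x y => rfl
  have hg_isom : Isometry g := Isometry.of_dist_eq fun x y => by
    have h1 : dist (g x) (g y) = ‖g x - g y‖ := dist_eq_norm _ _
    have h2 : g x - g y = g (x - y) := by
      show D.emb (frobSubst p α x) - D.emb (frobSubst p α y) = D.emb (frobSubst p α (x - y))
      rw [map_sub, map_sub]
    have h3 : e x - e y = e (x - y) := by
      show D'.emb x - D'.emb y = D'.emb (x - y)
      rw [map_sub]
    rw [h1, h2, hge, show dist x y = dist (e x) (e y) from rfl, dist_eq_norm, h3]
  have hui : IsUniformInducing e := he_isom.isUniformInducing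
  have di : IsDenseInducing e := hui.isDenseInducing hdense
  set Φ₀ : D'.carrier → D.carrier := di.extend g with hΦ₀
  have hΦ₀e : ∀ f, Φ₀ (e f) = g f := fun f => di.extend_eq hg_isom.continuous f
  have hΦ₀c : Continuous Φ₀ :=
    (uniformContinuous_uniformly_extend hui hdense hg_isom.uniformContinuous).continuous
  have hadd : ∀ x y : D'.carrier, Φ₀ (x + y) = Φ₀ x + Φ₀ y := by
    have hdd : DenseRange (Prod.map e e) := hdense.prodMap hdense
    have hcont1 : Continuous fun q : D'.carrier × D'.carrier => Φ₀ (q.1 + q.2) :=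
      hΦ₀c.comp (continuous_fst.add continuous_snd)
    have hcont2 : Continuous fun q : D'.carrier × D'.carrier => Φ₀ q.1 + Φ₀ q.2 :=
      (hΦ₀c.comp continuous_fst).add (hΦ₀c.comp continuous_snd)
    have heq := Continuous.ext_on hdd hcont1 hcont2 (fun x hx => by
      obtain ⟨⟨a, b⟩, rfl⟩ := hx
      show Φ₀ (e a + e b) = Φ₀ (e a) + Φ₀ (e b)
      have hab : e a + e b = e (a + b) := by
        show D'.emb a + D'.emb b = D'.emb (a + b)
        rw [map_add]
      rw [hab, hΦ₀e, hΦ₀e, hΦ₀e]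
      show D.emb (frobSubst p α (a + b)) = _
      rw [map_add, map_add])
    exact fun x y => congrFun heq (x, y)
  have hmul : ∀ x y : D'.carrier, Φ₀ (x * y) = Φ₀ x * Φ₀ y := by
    have hdd : DenseRange (Prod.map e e) := hdense.prodMap hdense
    have hcont1 : Continuous fun q : D'.carrier × D'.carrier => Φ₀ (q.1 * q.2) :=
      hΦ₀c.comp (continuous_fst.mul continuous_snd)
    have hcont2 : Continuous fun q : D'.carrier × D'.carrier => Φ₀ q.1 * Φ₀ q.2 :=
      (hΦ₀c.comp continuous_fst).mul (hΦ₀c.comp continuous_snd)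
    have heq := Continuous.ext_on hdd hcont1 hcont2 (fun x hx => by
      obtain ⟨⟨a, b⟩, rfl⟩ := hx
      show Φ₀ (e a * e b) = Φ₀ (e a) * Φ₀ (e b)
      have hab : e a * e b = e (a * b) := by
        show D'.emb a * D'.emb b = D'.emb (a * b)
        rw [map_mul]
      rw [hab, hΦ₀e, hΦ₀e, hΦ₀e]
      show D.emb (frobSubst p α (a * b)) = _
      rw [map_mul, map_mul])
    exact fun x y => congrFun heq (x, y)
  have hone : Φ₀ 1 = 1 := by
    have h1 : (1 : D'.carrier) = e 1 := by
      show (1 : D'.carrier) = D'.emb 1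
      rw [map_one]
    rw [h1, hΦ₀e]
    show D.emb (frobSubst p α 1) = 1
    rw [map_one, map_one]
  have hzero : Φ₀ 0 = 0 := by
    have h1 : (0 : D'.carrier) = e 0 := by
      show (0 : D'.carrier) = D'.emb 0
      rw [map_zero]
    rw [h1, hΦ₀e]
    show D.emb (frobSubst p α 0) = 0
    rw [map_zero, map_zero]
  have hcomm : ∀ c : ℚ_[p], Φ₀ (algebraMap ℚ_[p] D'.carrier c) =
      algebraMap ℚ_[p] D.carrier c := by
    intro c
    have h1 : algebraMap ℚ_[p] D'.carrier c
        = e (algebraMap ℚ_[p] (MvPolynomial (Fin n) ℚ_[p]) c) := (D'.emb.commutes c).symm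
    rw [h1, hΦ₀e]
    show D.emb (frobSubst p α (algebraMap ℚ_[p] (MvPolynomial (Fin n) ℚ_[p]) c)) = _
    rw [AlgHom.commutes, AlgHom.commutes]
  let Φ : D'.carrier →ₐ[ℚ_[p]] D.carrier :=
    { toFun := Φ₀
      map_one' := hone
      map_mul' := hmul
      map_zero' := hzero
      map_add' := hadd
      commutes' := hcomm }
  refine ⟨hnorm, ⟨Φ, ⟨hΦ₀c, fun f => hΦ₀e f⟩, ?_⟩, part3⟩
  rintro Ψ ⟨hΨc, hΨe⟩
  refine DFunLike.coe_injective ?_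
  show (⇑Ψ : D'.carrier → D.carrier) = ⇑Φ
  refine Continuous.ext_on hdense hΨc hΦ₀c ?_
  rintro x ⟨f, rfl⟩
  show Ψ (e f) = Φ₀ (e f)
  rw [hΨe f, hΦ₀e f]
end

section
/- Let s ≤ r be tuples of positive reals with r_α < 1 for a fixed index α. Then the element (1+T_α)^p − 1 is a unit in the Banach algebra Π_{[s,r]}; more precisely (1+T_α)^p − 1 = T_α^p · (1 + u) where u = Σ_{k=1}^{p−1} binom(p,k) T_α^{k−p} satisfies ‖u‖_{[s,r]} < 1, so that 1 + u is invertible by a geometric series and T_α^p is invertible in Π_{[s,r]}. -/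
open scoped BigOperators

/-- The variable `T_α` of the Laurent polynomial ring, as the monomial with exponent
`Pi.single α 1`. -/
noncomputable def Tvar (p : ℕ) [Fact p.Prime] {n : ℕ} (α : Fin n) :
    AddMonoidAlgebra ℚ_[p] (Fin n → ℤ) :=
  AddMonoidAlgebra.single (Pi.single α (1 : ℤ)) 1

/-- The element `u = Σ_{k=1}^{p−1} binom(p,k) T_α^{k−p}` of the Laurent polynomial ring. -/
noncomputable def uElt (p : ℕ) [Fact p.Prime] {n : ℕ} (α : Fin n) :
    AddMonoidAlgebra ℚ_[p] (Fin n → ℤ) :=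
  ∑ k ∈ Finset.Ico 1 p,
    AddMonoidAlgebra.single (Pi.single α ((k : ℤ) - (p : ℤ))) ((p.choose k : ℚ_[p]))

lemma Tvar_pow (p : ℕ) [Fact p.Prime] {n : ℕ} (α : Fin n) (k : ℕ) :
    (Tvar p α) ^ k = AddMonoidAlgebra.single (Pi.single α (k : ℤ)) 1 := by
  induction k with
  | zero => simp [AddMonoidAlgebra.one_def]
  | succ k ih =>
    rw [pow_succ, ih, Tvar, AddMonoidAlgebra.single_mul_single, one_mul, ← Pi.single_add]
    push_cast
    ring_nf

lemma key_identity (p : ℕ) [Fact p.Prime] {n : ℕ} (α : Fin n) :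
    ((1 + Tvar p α) ^ p - 1 : AddMonoidAlgebra ℚ_[p] (Fin n → ℤ)) =
      (Tvar p α) ^ p * (1 + uElt p α) := by
  have hp : p.Prime := Fact.out
  have hp1 : 1 ≤ p := hp.one_lt.le
  have hterm : ∀ k : ℕ, (Tvar p α) ^ k * (1:AddMonoidAlgebra ℚ_[p] (Fin n → ℤ)) ^ (p - k)
      * (p.choose k : AddMonoidAlgebra ℚ_[p] (Fin n → ℤ))
      = AddMonoidAlgebra.single (Pi.single α (k : ℤ)) ((p.choose k : ℚ_[p])) := by
    intro k
    rw [one_pow, mul_one, Tvar_pow, AddMonoidAlgebra.natCast_def,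
      AddMonoidAlgebra.single_mul_single, add_zero, one_mul]
  rw [add_comm (1 : AddMonoidAlgebra ℚ_[p] (Fin n → ℤ)), add_pow]
  simp only [hterm]
  rw [Finset.range_eq_Ico, Finset.sum_eq_sum_Ico_succ_bot (by omega : 0 < p + 1),
    Finset.sum_Ico_succ_top (by omega : 1 ≤ p)]
  have h0 : (AddMonoidAlgebra.single (Pi.single α ((0:ℕ) : ℤ)) ((p.choose 0 : ℚ_[p]))
      : AddMonoidAlgebra ℚ_[p] (Fin n → ℤ)) = 1 := by
    simp [AddMonoidAlgebra.one_def]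
  have hRHS : (Tvar p α) ^ p * (1 + uElt p α)
      = AddMonoidAlgebra.single (Pi.single α ((p:ℕ) : ℤ)) ((p.choose p : ℚ_[p]))
        + ∑ k ∈ Finset.Ico 1 p,
          AddMonoidAlgebra.single (Pi.single α (k : ℤ)) ((p.choose k : ℚ_[p])) := by
    rw [mul_add, mul_one, uElt, Finset.mul_sum, Tvar_pow]
    congr 1
    · simp
    · refine Finset.sum_congr rfl fun k hk => ?_
      rw [AddMonoidAlgebra.single_mul_single, one_mul, ← Pi.single_add]
      congr 2
      ring
  rw [h0, hRHS]
  abel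

lemma gaussNorm_uElt_le (p : ℕ) [Fact p.Prime] {n : ℕ} (α : Fin n) (t : Fin n → ℝ)
    (ht : 0 < t α) (R : ℝ) (htR : t α ≤ R) :
    gaussNorm p t (uElt p α) ≤ (p : ℝ) ^ (R - 1) := by
  have hp : p.Prime := Fact.out
  have hp1 : (1 : ℝ) < (p : ℝ) := by exact_mod_cast hp.one_lt
  have hp0 : (0 : ℝ) < (p : ℝ) := by positivity
  have hB : (0 : ℝ) ≤ (p : ℝ) ^ (R - 1) := (Real.rpow_pos_of_pos hp0 _).le
  refine ciSup_le fun m => ?_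
  classical
  have hcoeff : (uElt p α).coeff m = ∑ k ∈ Finset.Ico 1 p,
      (if Pi.single α ((k : ℤ) - (p : ℤ)) = m then (p.choose k : ℚ_[p]) else 0) := by
    rw [uElt, AddMonoidAlgebra.coeff_sum, Finset.sum_apply']
    exact Finset.sum_congr rfl fun k _ => by rw [AddMonoidAlgebra.coeff_single, Finsupp.single_apply]
  by_cases h : ∃ k ∈ Finset.Ico 1 p, Pi.single α ((k : ℤ) - (p : ℤ)) = m
  · obtain ⟨k₀, hk₀, hm⟩ := h
    rw [Finset.mem_Ico] at hk₀
    have hinj : ∀ k ∈ Finset.Ico 1 p, k ≠ k₀ → Pi.single α ((k : ℤ) - (p : ℤ)) ≠ m := by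
      intro k _ hne heq
      apply hne
      have := congrFun (heq.trans hm.symm) α
      simp only [Pi.single_eq_same] at this
      omega
    have hval : (uElt p α).coeff m = (p.choose k₀ : ℚ_[p]) := by
      rw [hcoeff, Finset.sum_eq_single_of_mem k₀ (Finset.mem_Ico.2 hk₀)
        (fun k hk hne => if_neg (hinj k hk hne)), if_pos hm]
    -- norm of the binomial coefficient
    obtain ⟨d, hd⟩ := hp.dvd_choose_self (by omega : k₀ ≠ 0) hk₀.2
    have hnorm : ‖(p.choose k₀ : ℚ_[p])‖ ≤ (p : ℝ)⁻¹ := by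
      rw [hd]
      push_cast
      rw [norm_mul, Padic.norm_p]
      calc (p:ℝ)⁻¹ * ‖(d : ℚ_[p])‖ ≤ (p:ℝ)⁻¹ * 1 := by
            refine mul_le_mul_of_nonneg_left ?_ (by positivity)
            exact_mod_cast Padic.norm_int_le_one (d : ℤ)
        _ = (p:ℝ)⁻¹ := mul_one _
    -- the weight
    have hweight : gaussWeight p t m = (p : ℝ) ^ (t α * ((p : ℝ) - k₀) / ((p:ℝ) - 1)) := by
      rw [← hm, gaussWeight]
      congr 1
      rw [Fintype.sum_eq_single α (fun β hβ => by simp [Pi.single_eq_of_ne hβ])]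
      rw [Pi.single_eq_same]
      push_cast
      ring
    have hexp : t α * ((p : ℝ) - k₀) / ((p:ℝ) - 1) ≤ R := by
      rw [div_le_iff₀ (by linarith)]
      have h1 : (p : ℝ) - k₀ ≤ (p : ℝ) - 1 := by
        have : (1 : ℝ) ≤ (k₀ : ℝ) := by exact_mod_cast hk₀.1
        linarith
      have h2 : (0:ℝ) ≤ (p : ℝ) - k₀ := by
        have : (k₀ : ℝ) ≤ (p : ℝ) := by exact_mod_cast hk₀.2.le
        linarith
      calc t α * ((p : ℝ) - k₀) ≤ R * ((p:ℝ) - 1) :=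
        mul_le_mul htR h1 h2 (le_trans ht.le htR)
      _ = R * ((p:ℝ) - 1) := rfl
    have hW : gaussWeight p t m ≤ (p : ℝ) ^ R := by
      rw [hweight]
      exact Real.rpow_le_rpow_of_exponent_le hp1.le hexp
    have hWpos : (0:ℝ) ≤ gaussWeight p t m := by
      rw [hweight]; exact (Real.rpow_pos_of_pos hp0 _).le
    calc ‖(uElt p α).coeff m‖ * gaussWeight p t m ≤ (p:ℝ)⁻¹ * (p:ℝ) ^ R := by
          rw [hval]
          exact mul_le_mul hnorm hW hWpos (by positivity)
      _ = (p : ℝ) ^ (R - 1) := by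
          rw [← Real.rpow_neg_one (p:ℝ), ← Real.rpow_add hp0]
          ring_nf
  · have hzero : (uElt p α).coeff m = 0 := by
      rw [hcoeff]
      refine Finset.sum_eq_zero fun k hk => if_neg fun heq => h ⟨k, hk, heq⟩
    rw [hzero]
    simpa using hB

lemma isUnit_Tvar (p : ℕ) [Fact p.Prime] {n : ℕ} (α : Fin n) : IsUnit (Tvar p α) := by
  refine IsUnit.of_mul_eq_one (AddMonoidAlgebra.single (-Pi.single α (1:ℤ)) 1) ?_
  rw [Tvar, AddMonoidAlgebra.single_mul_single, add_neg_cancel, one_mul,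
    AddMonoidAlgebra.one_def]


/-- For `0 < s ≤ r` with `r_α < 1`, the element `(1+T_α)^p − 1` is a unit in `Π_{[s,r]}`;
more precisely `(1+T_α)^p − 1 = T_α^p·(1+u)` with `u = Σ_{k=1}^{p−1} binom(p,k) T_α^{k−p}`
of interval norm `< 1`, so that `1 + u` and `T_α^p`, hence `(1+T_α)^p − 1`, are invertible
in `Π_{[s,r]}`. -/
theorem one_add_T_pow_p_sub_one_isUnit
    (p : ℕ) [Fact p.Prime] (n : ℕ) (α : Fin n) (s r : Fin n → ℝ)
    (hs : ∀ β, 0 < s β) (hsr : ∀ β, s β ≤ r β) (hrα : r α < 1)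
    (C : GaussCompletion p n (intervalGaussNorm p s r)) :
    ((1 + Tvar p α) ^ p - 1 : AddMonoidAlgebra ℚ_[p] (Fin n → ℤ)) =
      (Tvar p α) ^ p * (1 + uElt p α) ∧
    intervalGaussNorm p s r (uElt p α) < 1 ∧
    IsUnit (1 + C.emb (uElt p α)) ∧
    IsUnit (C.emb ((Tvar p α) ^ p)) ∧
    IsUnit (C.emb ((1 + Tvar p α) ^ p - 1)) := by
  have hp : p.Prime := Fact.out
  have hp1 : (1:ℝ) < (p:ℝ) := by exact_mod_cast hp.one_lt
  have hid := key_identity p α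
  have hnorm : intervalGaussNorm p s r (uElt p α) < 1 := by
    have hle : intervalGaussNorm p s r (uElt p α) ≤ (p:ℝ) ^ (r α - 1) := by
      refine ciSup_le fun c => ?_
      have h1 : 0 < corner s r c α := by
        simp only [corner]; split
        · exact lt_of_lt_of_le (hs α) (hsr α)
        · exact hs α
      have h2 : corner s r c α ≤ r α := by
        simp only [corner]; split
        · exact le_rfl
        · exact hsr α
      exact gaussNorm_uElt_le p α _ h1 _ h2
    exact lt_of_le_of_lt hle (Real.rpow_lt_one_of_one_lt_of_neg hp1 (by linarith))
  have hu : IsUnit (1 + C.emb (uElt p α)) := by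
    have h : ‖C.emb (uElt p α)‖ < 1 := by rw [C.isometric]; exact hnorm
    have h2 := isUnit_one_sub_of_norm_lt_one (x := -C.emb (uElt p α)) (by simpa using h)
    simpa [sub_neg_eq_add] using h2
  have hT : IsUnit (C.emb ((Tvar p α) ^ p)) := ((isUnit_Tvar p α).pow p).map C.emb
  refine ⟨hid, hnorm, hu, hT, ?_⟩
  rw [hid, map_mul]
  refine hT.mul ?_
  rw [map_add, map_one]
  exact hu
end
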